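/- arXiv:1909.09121 — 5 statements merged into one kernel-verified Lean document; each statement's English description precedes it below -/
import Mathlib

section
/- Let k ∈ ℕ, M ⊆ ℕ^k, and define the entire function g(z) = Σ over (m₁,…,m_k) ∈ M of ∏_{i=1}^k e^{−z} z^{m_i}/m_i! (which agrees with P_z(Γ) for real z > 0, where Γ = {ω : (ω₁,…,ω_k) ∈ M}). Then for every real λ > 0, every δ with 0 < δ < λ, and every z ∈ ℂ with |z − λ| ≤ δ, one has |g(z)| ≤ e^{kδ} Σ_{ℓ=0}^∞ (1 + δ/λ)^ℓ · P_λ(Γ ∩ {ω : ω₁+⋯+ω_k = ℓ}). -/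
open MeasureTheory ProbabilityTheory Filter Topology
open scoped ENNReal NNReal

/-- `P` is the family of laws of a sequence of i.i.d. Poisson(λ) random variables:
for each `λ > 0`, `P λ` is a probability measure on `ℕ → ℕ` whose finite-dimensional
marginals are finite products of Poisson(λ) distributions.  This characterizes the
countable product of Poisson(λ) measures on `ℕ^ℕ`. -/
def IsPoissonSeedFamily (P : ℝ → Measure (ℕ → ℕ)) : Prop :=
  ∀ lam : ℝ, 0 < lam → IsProbabilityMeasure (P lam) ∧
    ∀ k : ℕ, (P lam).map (fun ω (j : Fin k) => ω j.1)
      = Measure.pi (fun _ : Fin k => poissonMeasure lam.toNNReal)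

/-- The first `k` coordinates `(ω₁, …, ω_k)` of a seed `ω ∈ ℕ^ℕ` (0-indexed). -/
def restrictSeed (k : ℕ) (ω : ℕ → ℕ) : Fin k → ℕ := fun j => ω j.1

/-- An event is `k`-tautologically determined if it is of the form
`{ω : (ω₁, …, ω_k) ∈ B}` for some `B ⊆ ℕ^k`. -/
def TautDetermined (k : ℕ) (A : Set (ℕ → ℕ)) : Prop :=
  ∃ B : Set (Fin k → ℕ), A = {ω | restrictSeed k ω ∈ B}

private lemma tsum_pi_prod' : ∀ (k : ℕ) (f : ℕ → ℝ≥0∞),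
    ∑' m : Fin k → ℕ, ∏ i, f (m i) = (∑' n, f n) ^ k := by
  intro k
  induction k with
  | zero =>
    intro f
    simp only [Finset.univ_eq_empty, Finset.prod_empty, pow_zero]
    exact (tsum_eq_single (fun (i : Fin 0) => 0)
      (by intro b hb; exact absurd (funext fun i => i.elim0) hb)).trans rfl
  | succ k ih =>
    intro f
    rw [← Equiv.tsum_eq (Fin.consEquiv (fun _ : Fin (k+1) => ℕ)) (fun m => ∏ i, f (m i))]
    rw [ENNReal.tsum_prod']
    simp only [Fin.consEquiv_apply, Fin.prod_univ_succ, Fin.cons_zero, Fin.cons_succ]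
    rw [pow_succ]
    calc ∑' (a : ℕ) (b : Fin k → ℕ), f a * ∏ i, f (b i)
        = ∑' (a : ℕ), f a * ∑' (b : Fin k → ℕ), ∏ i, f (b i) := by
          congr 1; ext a; exact ENNReal.tsum_mul_left
      _ = (∑' n, f n) * (∑' n, f n) ^ k := by rw [ih f, ENNReal.tsum_mul_right]
      _ = (∑' n, f n) ^ k * (∑' n, f n) := mul_comm _ _

private lemma tsum_partition' {k : ℕ} (F : (Fin k → ℕ) → ℝ≥0∞) (S : Set (Fin k → ℕ)) :
    ∑' m : S, F m = ∑' ℓ : ℕ, ∑' m : ↥(S ∩ {m | ∑ i, m i = ℓ}), F m := by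
  simp only [tsum_subtype]
  rw [ENNReal.tsum_comm (f := fun ℓ m => (S ∩ {m | ∑ i, m i = ℓ}).indicator F m)]
  congr 1
  ext m
  have h1 : ∀ ℓ : ℕ, (S ∩ {m | ∑ i, m i = ℓ}).indicator F m
      = if ℓ = ∑ i, m i then S.indicator F m else 0 := by
    intro ℓ
    by_cases h : ℓ = ∑ i, m i
    · subst h
      by_cases hm : m ∈ S
      · simp [Set.indicator_of_mem, hm, Set.indicator_of_mem (Set.mem_inter hm rfl)]
      · rw [if_pos rfl, Set.indicator_of_notMem hm,
          Set.indicator_of_notMem (fun h' => hm (Set.mem_of_mem_inter_left h'))]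
    · rw [Set.indicator_of_notMem (fun h' => h ((Set.mem_of_mem_inter_right h').symm)), if_neg h]
  simp only [h1]
  exact (tsum_ite_eq (∑ i, m i) (fun _ => S.indicator F m)).symm

private lemma tsum_measure_singleton' {α : Type*} [MeasurableSpace α] [Countable α]
    [MeasurableSingletonClass α] (μ : Measure α) (s : Set α) :
    (∑' b : s, μ {(b : α)}) = μ s := by
  simpa using tsum_measure_preimage_singleton (μ := μ) s.to_countable (f := id)
    (fun y _ => measurableSet_singleton y)

/-- Bound on the entire extension `g(z) = Σ_{m ∈ M} Π_i e^{-z} z^{m_i}/m_i!` of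
`λ ↦ P_λ(Γ)`, `Γ = {ω : (ω₁,…,ω_k) ∈ M}`: for `λ > 0`, `0 < δ < λ` and `|z - λ| ≤ δ`,
`|g(z)| ≤ e^{kδ} Σ_ℓ (1 + δ/λ)^ℓ P_λ(Γ ∩ {ω₁+⋯+ω_k = ℓ})`. -/
theorem entire_extension_bound
    (P : ℝ → Measure (ℕ → ℕ)) (hP : IsPoissonSeedFamily P)
    (k : ℕ) (M : Set (Fin k → ℕ))
    (g : ℂ → ℂ)
    (hg : ∀ z : ℂ, g z = ∑' m : M, ∏ i : Fin k,
      Complex.exp (-z) * z ^ (m.1 i) / ((m.1 i).factorial : ℂ)) :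
    ∀ lam : ℝ, 0 < lam → ∀ δ : ℝ, 0 < δ → δ < lam →
      ∀ z : ℂ, ‖z - (lam : ℂ)‖ ≤ δ →
        ‖g z‖ ≤ Real.exp (k * δ) *
          ∑' ℓ : ℕ, (1 + δ / lam) ^ ℓ *
            (P lam ({ω | restrictSeed k ω ∈ M} ∩
              {ω | ∑ i ∈ Finset.range k, ω i = ℓ})).toReal := by
  intro lam hlam δ hδ hδlam z hz
  set c : ℝ := 1 + δ / lam with hc_def
  have hc0 : 0 ≤ c := by positivity
  set p : ℕ → ℝ := fun n => poissonPMFReal lam.toNNReal n with hp_def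
  have hp_nonneg : ∀ n, 0 ≤ p n := fun n => poissonPMFReal_nonneg
  set b : ℕ → ℝ := fun n => Real.exp (δ - lam) * ((lam + δ) ^ n / n.factorial) with hb_def
  have hb_nonneg : ∀ n, 0 ≤ b n := by
    intro n; simp only [hb_def]; positivity
  have hb_eq : ∀ n, b n = Real.exp δ * c ^ n * p n := by
    intro n
    simp only [hb_def, hp_def, hc_def]
    rw [poissonPMFReal, Real.coe_toNNReal _ hlam.le]
    rw [Real.exp_sub]
    have h1 : (1 + δ/lam) ^ n * lam ^ n = (lam + δ) ^ n := by
      rw [← mul_pow]; congr 1; field_simp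
    rw [Real.exp_neg]
    field_simp
    rw [div_pow, div_mul_cancel₀ _ (pow_ne_zero _ hlam.ne')]
  have hb_summable : Summable b :=
    (Real.summable_pow_div_factorial (lam + δ)).mul_left _
  set B : (Fin k → ℕ) → ℝ := fun m => ∏ i, b (m i) with hB_def
  have hB_nonneg : ∀ m, 0 ≤ B m := fun m =>
    Finset.prod_nonneg fun i _ => hb_nonneg _
  have hofB : ∀ m, ENNReal.ofReal (B m) = ∏ i, ENNReal.ofReal (b (m i)) := fun m =>
    ENNReal.ofReal_prod_of_nonneg fun i _ => hb_nonneg _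
  have hsumB_top : ∑' m : Fin k → ℕ, ENNReal.ofReal (B m) ≠ ⊤ := by
    simp only [hofB]
    rw [tsum_pi_prod' k (fun n => ENNReal.ofReal (b n))]
    rw [← ENNReal.ofReal_tsum_of_nonneg hb_nonneg hb_summable]
    exact ENNReal.pow_ne_top ENNReal.ofReal_ne_top
  have hB_summable : Summable B := by
    have h := ENNReal.summable_toReal hsumB_top
    simpa only [ENNReal.toReal_ofReal (hB_nonneg _)] using h
  -- pointwise bound
  have hterm : ∀ m : Fin k → ℕ,
      ‖∏ i : Fin k, Complex.exp (-z) * z ^ (m i) / ((m i).factorial : ℂ)‖ ≤ B m := by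
    intro m
    rw [norm_prod]
    refine Finset.prod_le_prod (fun i _ => norm_nonneg _) (fun i _ => ?_)
    set n := m i
    have hre : lam - δ ≤ z.re := by
      have h1 : |(z - (lam:ℂ)).re| ≤ δ := le_trans (Complex.abs_re_le_norm _) hz
      have h2 : (z - (lam:ℂ)).re = z.re - lam := by simp
      rw [h2, abs_le] at h1
      linarith [h1.1]
    have habs : ‖z‖ ≤ lam + δ := by
      calc ‖z‖ = ‖(z - (lam:ℂ)) + (lam:ℂ)‖ := by ring_nf
        _ ≤ ‖z - (lam:ℂ)‖ + ‖(lam:ℂ)‖ := norm_add_le _ _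
        _ ≤ δ + lam := by
            rw [Complex.norm_real, Real.norm_eq_abs,
              abs_of_pos hlam]
            exact add_le_add hz le_rfl
        _ = lam + δ := add_comm _ _
    have hexp : ‖Complex.exp (-z)‖ ≤ Real.exp (δ - lam) := by
      rw [Complex.norm_exp]
      exact Real.exp_le_exp.2 (by simp; linarith)
    calc ‖Complex.exp (-z) * z ^ n / (n.factorial : ℂ)‖
        = ‖Complex.exp (-z)‖ * ‖z‖ ^ n / (n.factorial : ℝ) := by
          rw [norm_div, norm_mul, norm_pow]
          norm_num
      _ ≤ Real.exp (δ - lam) * (lam + δ) ^ n / (n.factorial : ℝ) := by gcongr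
      _ = b n := by rw [hb_def]; ring
  have hnorm_summable : Summable (fun m : M =>
      ‖∏ i : Fin k, Complex.exp (-z) * z ^ (m.1 i) / ((m.1 i).factorial : ℂ)‖) :=
    Summable.of_nonneg_of_le (fun _ => norm_nonneg _) (fun m => hterm m.1)
      (hB_summable.subtype M)
  -- the measure identification
  set ν : Measure (Fin k → ℕ) := Measure.pi (fun _ : Fin k => poissonMeasure lam.toNNReal)
    with hν_def
  have hν_singleton : ∀ m : Fin k → ℕ, ν {m} = ∏ i, ENNReal.ofReal (p (m i)) := by
    intro m
    have hs : ({m} : Set (Fin k → ℕ)) = Set.pi Set.univ (fun i => {m i}) := by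
      ext x; simp [funext_iff, Set.mem_pi]
    rw [hν_def, hs, Measure.pi_pi]
    refine Finset.prod_congr rfl fun i _ => ?_
    exact poissonMeasure_singleton _ _
  have hrestrict_meas : Measurable (restrictSeed k) :=
    measurable_pi_lambda _ fun j => measurable_pi_apply j.1
  have hmap : (P lam).map (restrictSeed k) = ν := (hP lam hlam).2 k
  have hmeasP : ∀ ℓ : ℕ, P lam ({ω | restrictSeed k ω ∈ M} ∩
      {ω | ∑ i ∈ Finset.range k, ω i = ℓ}) = ν (M ∩ {m | ∑ i, m i = ℓ}) := by
    intro ℓ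
    have hset : {ω | restrictSeed k ω ∈ M} ∩ {ω | ∑ i ∈ Finset.range k, ω i = ℓ}
        = restrictSeed k ⁻¹' (M ∩ {m | ∑ i, m i = ℓ}) := by
      ext ω
      simp only [Set.mem_inter_iff, Set.mem_setOf_eq, Set.mem_preimage]
      have hsum : (∑ i : Fin k, restrictSeed k ω i) = ∑ i ∈ Finset.range k, ω i :=
        Fin.sum_univ_eq_sum_range (fun i => ω i) k
      constructor
      · rintro ⟨h1, h2⟩
        exact ⟨h1, by rw [hsum]; exact h2⟩
      · rintro ⟨h1, h2⟩
        exact ⟨h1, by rw [hsum] at h2; exact h2⟩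
    rw [hset, ← Measure.map_apply hrestrict_meas
      ((M ∩ {m | ∑ i, m i = ℓ}).to_countable.measurableSet), hmap]
  -- ENNReal computation of the sum of B over M
  set T : ℝ≥0∞ := ∑' m : M, ENNReal.ofReal (B m) with hT_def
  have hofb_fact : ∀ n : ℕ, ENNReal.ofReal (b n)
      = ENNReal.ofReal (Real.exp δ) * ENNReal.ofReal c ^ n * ENNReal.ofReal (p n) := by
    intro n
    rw [hb_eq n, ENNReal.ofReal_mul (by positivity), ENNReal.ofReal_mul (by positivity),
      ENNReal.ofReal_pow hc0]
  have hT2 : T = ∑' ℓ : ℕ, ENNReal.ofReal (Real.exp (k * δ)) * ENNReal.ofReal c ^ ℓ *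
      ν (M ∩ {m | ∑ i, m i = ℓ}) := by
    rw [hT_def, tsum_partition' (fun m => ENNReal.ofReal (B m)) M]
    congr 1
    ext ℓ
    have hBm : ∀ m : ↥(M ∩ {m | ∑ i, m i = ℓ}), ENNReal.ofReal (B m.1)
        = ENNReal.ofReal (Real.exp (k * δ)) * ENNReal.ofReal c ^ ℓ * ν {m.1} := by
      rintro ⟨m, hm⟩
      have hsum : ∑ i, m i = ℓ := hm.2
      rw [hofB, hν_singleton]
      simp only [hofb_fact]
      rw [Finset.prod_mul_distrib, Finset.prod_mul_distrib, Finset.prod_const,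
        Finset.prod_pow_eq_pow_sum, hsum, Finset.card_univ, Fintype.card_fin,
        ← ENNReal.ofReal_pow (Real.exp_nonneg δ), ← Real.exp_nat_mul]
    calc ∑' m : ↥(M ∩ {m | ∑ i, m i = ℓ}), ENNReal.ofReal (B m.1)
        = ∑' m : ↥(M ∩ {m | ∑ i, m i = ℓ}),
            ENNReal.ofReal (Real.exp (k * δ)) * ENNReal.ofReal c ^ ℓ * ν {m.1} := by
          exact tsum_congr hBm
      _ = ENNReal.ofReal (Real.exp (k * δ)) * ENNReal.ofReal c ^ ℓ *
            ∑' m : ↥(M ∩ {m | ∑ i, m i = ℓ}), ν {m.1} := by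
          rw [ENNReal.tsum_mul_left]
      _ = _ := by
          congr 1
          exact tsum_measure_singleton' ν _
  have hT_ne_top : T ≠ ⊤ := by
    refine ne_top_of_le_ne_top hsumB_top ?_
    rw [hT_def]
    exact ENNReal.summable.tsum_le_tsum_of_inj (Subtype.val) Subtype.val_injective
      (fun _ _ => zero_le) (fun _ => le_rfl) ENNReal.summable
  have hterm_ne_top : ∀ ℓ : ℕ, ENNReal.ofReal (Real.exp (k * δ)) * ENNReal.ofReal c ^ ℓ *
      ν (M ∩ {m | ∑ i, m i = ℓ}) ≠ ⊤ := by
    intro ℓ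
    exact ENNReal.mul_ne_top (ENNReal.mul_ne_top ENNReal.ofReal_ne_top
      (ENNReal.pow_ne_top ENNReal.ofReal_ne_top)) (measure_ne_top ν _)
  have hT1 : ∑' m : M, B m = T.toReal := by
    rw [hT_def, ← ENNReal.ofReal_tsum_of_nonneg (f := fun m : M => B m.1) (fun m => hB_nonneg _) (hB_summable.subtype M),
      ENNReal.toReal_ofReal (tsum_nonneg fun m => hB_nonneg _)]
  have hRHS : Real.exp (k * δ) * ∑' ℓ : ℕ, c ^ ℓ *
      (P lam ({ω | restrictSeed k ω ∈ M} ∩ {ω | ∑ i ∈ Finset.range k, ω i = ℓ})).toReal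
      = T.toReal := by
    rw [hT2, ENNReal.tsum_toReal_eq hterm_ne_top]
    rw [← tsum_mul_left]
    congr 1
    ext ℓ
    rw [hmeasP ℓ, ENNReal.toReal_mul, ENNReal.toReal_mul, ENNReal.toReal_pow,
      ENNReal.toReal_ofReal (Real.exp_nonneg _), ENNReal.toReal_ofReal hc0]
    ring
  rw [hg z]
  calc ‖∑' m : M, ∏ i : Fin k, Complex.exp (-z) * z ^ (m.1 i) / ((m.1 i).factorial : ℂ)‖
      ≤ ∑' m : M, ‖∏ i : Fin k, Complex.exp (-z) * z ^ (m.1 i) / ((m.1 i).factorial : ℂ)‖ :=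
        norm_tsum_le_tsum_norm hnorm_summable
    _ ≤ ∑' m : M, B m.1 :=
        hnorm_summable.tsum_le_tsum (fun m => hterm m.1) (hB_summable.subtype M)
    _ = T.toReal := hT1
    _ = Real.exp (k * δ) * ∑' ℓ : ℕ, c ^ ℓ *
          (P lam ({ω | restrictSeed k ω ∈ M} ∩
            {ω | ∑ i ∈ Finset.range k, ω i = ℓ})).toReal := hRHS.symm
end

section
/- Let 0 < λ < 1. Then there exist constants C, c > 0 such that for every k ≥ 1, P_λ({ω ∈ ℕ^ℕ : the tree encoded by ω has at least k vertices}) ≤ C e^{−ck}. -/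
open MeasureTheory ProbabilityTheory Filter Topology
open scoped NNReal ENNReal

/-- The tree encoded by the seed `ω` in breadth-first order (node `i+1` has `ω i`
children) has at least `k` vertices: `ω₁ + ⋯ + ω_j ≥ j` for every `1 ≤ j ≤ k - 1`. -/
def treeAtLeast (ω : ℕ → ℕ) (k : ℕ) : Prop :=
  ∀ j : ℕ, 1 ≤ j → j ≤ k - 1 → j ≤ ∑ i ∈ Finset.range j, ω i

/-- The 0-based index of the parent of the node of 0-based index `i` (for `i ≥ 1`):
the least `p` such that `ω₁ + ⋯ + ω_{p+1} ≥ i`. -/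
noncomputable def parent (ω : ℕ → ℕ) (i : ℕ) : ℕ :=
  sInf {p : ℕ | i ≤ ∑ t ∈ Finset.range (p + 1), ω t}

/-- The level of the node of 0-based index `i`: the root (index `0`) has level `0`,
and the level of any other node is one plus the level of its parent. -/
noncomputable def level (ω : ℕ → ℕ) (i : ℕ) : ℕ :=
  if h : parent ω i < i then level ω (parent ω i) + 1 else 0
termination_by i
decreasing_by exact h

/-- The exponential moment (probability generating function) of the Poisson distribution. -/
lemma poisson_mgf (r : ℝ≥0) {x : ℝ} (hx : 0 ≤ x) :
    ∫⁻ m, ENNReal.ofReal x ^ m ∂(poissonMeasure r)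
      = ENNReal.ofReal (Real.exp ((r : ℝ) * x - r)) := by
  have hsum : HasSum (fun m : ℕ => x ^ m * poissonPMFReal r m)
      (Real.exp ((r : ℝ) * x - r)) := by
    have h1 : HasSum (fun m : ℕ => ((r : ℝ) * x) ^ m / m.factorial)
        (Real.exp ((r : ℝ) * x)) := by
      rw [Real.exp_eq_exp_ℝ]
      exact NormedSpace.expSeries_div_hasSum_exp ((r : ℝ) * x)
    have h2 := h1.mul_left (Real.exp (-(r : ℝ)))
    have h3 : Real.exp (-(r : ℝ)) * Real.exp ((r : ℝ) * x)
        = Real.exp ((r : ℝ) * x - r) := by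
      rw [← Real.exp_add]; ring_nf
    rw [h3] at h2
    convert h2 using 2 with m
    · rfl
    unfold poissonPMFReal
    rw [mul_pow]
    ring
  rw [lintegral_countable']
  have hpt : ∀ m : ℕ, poissonMeasure r {m} = ENNReal.ofReal (poissonPMFReal r m) := by
    intro m
    rw [poissonMeasure_singleton]
    rfl
  calc ∑' m : ℕ, ENNReal.ofReal x ^ m * poissonMeasure r {m}
      = ∑' m : ℕ, ENNReal.ofReal (x ^ m * poissonPMFReal r m) := by
        refine tsum_congr fun m => ?_
        rw [hpt, ← ENNReal.ofReal_pow hx,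
          ← ENNReal.ofReal_mul (pow_nonneg hx m)]
    _ = ENNReal.ofReal (Real.exp ((r : ℝ) * x - r)) := by
        rw [← ENNReal.ofReal_tsum_of_nonneg
            (fun m => mul_nonneg (pow_nonneg hx m) poissonPMFReal_nonneg)
            hsum.summable, hsum.tsum_eq]

/-- The Lebesgue integral of a product of identical single-coordinate functions over a
finite i.i.d. product measure is the power of the single-coordinate integral. -/
lemma lintegral_pi_pow (ν : Measure ℕ) [IsProbabilityMeasure ν] (g : ℕ → ℝ≥0∞) (n : ℕ) :
    ∫⁻ v : Fin n → ℕ, ∏ j, g (v j) ∂(Measure.pi fun _ : Fin n => ν)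
      = (∫⁻ m, g m ∂ν) ^ n := by
  induction n with
  | zero =>
      simp only [Finset.univ_eq_empty, Finset.prod_empty, lintegral_const, pow_zero]
      simp
  | succ n ih =>
      have hg : Measurable g := measurable_of_countable g
      have hmp := (measurePreserving_piFinSuccAbove (fun _ : Fin (n + 1) => ν) 0).symm
      have hFmeas : Measurable (fun v : Fin (n + 1) → ℕ => ∏ j, g (v j)) :=
        Finset.measurable_prod _ fun j _ => hg.comp (measurable_pi_apply j)
      calc ∫⁻ v : Fin (n + 1) → ℕ, ∏ j, g (v j) ∂(Measure.pi fun _ : Fin (n + 1) => ν)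
          = ∫⁻ p : ℕ × (Fin n → ℕ), g p.1 * ∏ j : Fin n, g (p.2 j)
              ∂(ν.prod (Measure.pi fun _ : Fin n => ν)) := by
            rw [← hmp.lintegral_comp hFmeas]
            refine lintegral_congr fun p => ?_
            simp [MeasurableEquiv.piFinSuccAbove_symm_apply, Fin.insertNthEquiv,
              Fin.prod_univ_succ, Fin.insertNth_zero, Fin.zero_succAbove]
        _ = (∫⁻ m, g m ∂ν) * ∫⁻ v : Fin n → ℕ, ∏ j, g (v j)
              ∂(Measure.pi fun _ : Fin n => ν) := by
            exact lintegral_prod_mul hg.aemeasurable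
              (Finset.measurable_prod _ fun j _ =>
                hg.comp (measurable_pi_apply j)).aemeasurable
        _ = (∫⁻ m, g m ∂ν) ^ (n + 1) := by rw [ih, pow_succ']

/-- For `0 < λ < 1`, the probability that the tree encoded by the seed has at least `k`
vertices decays exponentially in `k`. -/
theorem subcritical_tree_size_tail
    (P : ℝ → Measure (ℕ → ℕ)) (hP : IsPoissonSeedFamily P)
    (lam : ℝ) (hlam0 : 0 < lam) (hlam1 : lam < 1) :
    ∃ C > (0 : ℝ), ∃ c > (0 : ℝ), ∀ k : ℕ, 1 ≤ k →
      P lam {ω | treeAtLeast ω k} ≤ ENNReal.ofReal (C * Real.exp (-c * k)) := by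
  obtain ⟨hprob, hmap⟩ := hP lam hlam0
  set r : ℝ≥0 := lam.toNNReal with hr_def
  have hr : (r : ℝ) = lam := Real.coe_toNNReal _ hlam0.le
  set c : ℝ := lam - 1 - Real.log lam with hc
  have hcpos : 0 < c := by
    have := Real.log_lt_sub_one_of_pos hlam0 (ne_of_lt hlam1)
    simp only [hc]; linarith
  refine ⟨Real.exp c, Real.exp_pos c, c, hcpos, fun k hk => ?_⟩
  set n : ℕ := k - 1 with hn
  set x : ℝ := lam⁻¹ with hxdef
  have hx0 : 0 < x := inv_pos.mpr hlam0
  have hx1 : 1 ≤ x := (one_le_inv₀ hlam0).mpr hlam1.le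
  set μ : Measure (Fin n → ℕ) := Measure.pi fun _ : Fin n => poissonMeasure r with hμ
  set B : Set (Fin n → ℕ) := {v | (n : ℕ) ≤ ∑ j, v j} with hB
  have hBmeas : MeasurableSet B := by
    have : B = (fun v : Fin n → ℕ => ∑ j, v j) ⁻¹' (Set.Ici n) := rfl
    rw [this]
    exact (Finset.measurable_sum _ fun j _ => measurable_pi_apply j) (by trivial)
  -- Markov inequality with the exponential moment
  have hfmeas : Measurable (fun v : Fin n → ℕ => ENNReal.ofReal x ^ (∑ j, v j)) :=
    measurable_of_countable _
  have hmarkov : ENNReal.ofReal x ^ n * μ B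
      ≤ ∫⁻ v, ENNReal.ofReal x ^ (∑ j, v j) ∂μ := by
    refine le_trans (mul_le_mul_right (measure_mono ?_) _)
      (mul_meas_ge_le_lintegral₀ hfmeas.aemeasurable (ENNReal.ofReal x ^ n))
    intro v hv
    exact pow_le_pow_right₀ (ENNReal.one_le_ofReal.mpr hx1) hv
  have hintegral : ∫⁻ v, ENNReal.ofReal x ^ (∑ j, v j) ∂μ
      = ENNReal.ofReal (Real.exp (1 - lam)) ^ n := by
    have h1 : ∀ v : Fin n → ℕ, ENNReal.ofReal x ^ (∑ j, v j)
        = ∏ j, ENNReal.ofReal x ^ (v j) := fun v => (Finset.prod_pow_eq_pow_sum _ _ _).symm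
    simp_rw [h1]
    rw [lintegral_pi_pow, poisson_mgf r hx0.le]
    congr 2
    rw [hr, hxdef]
    rw [mul_inv_cancel₀ (ne_of_gt hlam0)]
  have hXn_ne_zero : ENNReal.ofReal x ^ n ≠ 0 :=
    pow_ne_zero n (by simpa using hx0)
  have hXn_ne_top : ENNReal.ofReal x ^ n ≠ ⊤ :=
    ENNReal.pow_ne_top ENNReal.ofReal_ne_top
  have hμB : μ B ≤ (ENNReal.ofReal x ^ n)⁻¹ * ENNReal.ofReal (Real.exp (1 - lam)) ^ n := by
    rw [← one_mul (μ B), ← ENNReal.inv_mul_cancel hXn_ne_zero hXn_ne_top, mul_assoc]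
    exact mul_le_mul_right (hmarkov.trans_eq hintegral) _
  have hkey : (ENNReal.ofReal x ^ n)⁻¹ * ENNReal.ofReal (Real.exp (1 - lam)) ^ n
      = ENNReal.ofReal (Real.exp (-c * n)) := by
    rw [← ENNReal.ofReal_pow hx0.le, ← ENNReal.ofReal_inv_of_pos (pow_pos hx0 n),
      ← ENNReal.ofReal_pow (Real.exp_nonneg _),
      ← ENNReal.ofReal_mul (by positivity)]
    congr 1
    have hxinv : (x ^ n)⁻¹ = lam ^ n := by
      rw [hxdef, ← inv_pow, inv_inv]
    have hlamn : lam ^ n = Real.exp (n * Real.log lam) := by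
      rw [← Real.log_pow, Real.exp_log (pow_pos hlam0 n)]
    rw [hxinv, hlamn, ← Real.exp_nat_mul, ← Real.exp_add]
    congr 1
    simp only [hc]
    ring
  -- Relate the event to the product measure via the finite-dimensional marginal
  have hmeas_restrict : Measurable (restrictSeed n) :=
    measurable_pi_lambda _ fun j => measurable_pi_apply j.1
  have hincl : {ω | treeAtLeast ω k} ⊆ restrictSeed n ⁻¹' B := by
    intro ω hω
    show (n : ℕ) ≤ ∑ j : Fin n, ω j.1
    rw [Fin.sum_univ_eq_sum_range (fun i => ω i) n]
    rcases Nat.eq_zero_or_pos n with h0 | hpos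
    · simp [h0]
    · exact hω n hpos le_rfl
  have hmap' : (P lam).map (restrictSeed n) = μ := hmap n
  have hPB : P lam {ω | treeAtLeast ω k} ≤ μ B := by
    calc P lam {ω | treeAtLeast ω k} ≤ P lam (restrictSeed n ⁻¹' B) := measure_mono hincl
      _ = (P lam).map (restrictSeed n) B := (Measure.map_apply hmeas_restrict hBmeas).symm
      _ = μ B := by rw [hmap']
  refine hPB.trans ((hμB.trans_eq hkey).trans ?_)
  apply ENNReal.ofReal_le_ofReal
  have hcast : (n : ℝ) = (k : ℝ) - 1 := by
    rw [hn, Nat.cast_sub hk, Nat.cast_one]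
  rw [← Real.exp_add]
  apply Real.exp_le_exp.mpr
  rw [hcast]
  ring_nf
  exact le_refl _
end

section
/- Let A = {ω ∈ ℕ^ℕ : there exists i ≥ 1 such that the tree encoded by ω has at least i vertices, node i lies on an even level, and ω_i = 1} (i.e., some node on an even level has exactly one child). Then A is rapidly determined over the interval (λ₀, λ₁) for every 0 ≤ λ₀ < λ₁ ≤ ∞. -/
open MeasureTheory ProbabilityTheory Filter Topology

/-! ### Auxiliary lemmas on `parent` and `level` -/

open scoped ENNReal NNReal

lemma parent_lt {ω : ℕ → ℕ} {i : ℕ} (hi : 1 ≤ i) (hs : i ≤ ∑ t ∈ Finset.range i, ω t) :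
    parent ω i < i := by
  have hmem : (i - 1) ∈ {p : ℕ | i ≤ ∑ t ∈ Finset.range (p + 1), ω t} := by
    have h : i - 1 + 1 = i := by omega
    simp only [Set.mem_setOf_eq, h]; exact hs
  have := Nat.sInf_le hmem
  unfold parent; omega

lemma level_zero (ω : ℕ → ℕ) : level ω 0 = 0 := by
  rw [level]; simp

lemma level_succ {ω : ℕ → ℕ} {i : ℕ} (h : parent ω i < i) :
    level ω i = level ω (parent ω i) + 1 := by
  rw [level]; simp [h]

lemma parent_bounds {ω : ℕ → ℕ} {i : ℕ} (hi : 1 ≤ i) (hs : i ≤ ∑ t ∈ Finset.range i, ω t) :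
    ∑ t ∈ Finset.range (parent ω i), ω t < i ∧ i ≤ ∑ t ∈ Finset.range (parent ω i + 1), ω t := by
  have hmem : (i - 1) ∈ {p : ℕ | i ≤ ∑ t ∈ Finset.range (p + 1), ω t} := by
    have h : i - 1 + 1 = i := by omega
    simp only [Set.mem_setOf_eq, h]; exact hs
  have h2 : i ≤ ∑ t ∈ Finset.range (parent ω i + 1), ω t :=
    Nat.sInf_mem (Set.nonempty_of_mem hmem)
  refine ⟨?_, h2⟩
  rcases Nat.eq_zero_or_pos (parent ω i) with h0 | h0
  · simp [h0]; omega
  · have hnot : parent ω i - 1 ∉ {p : ℕ | i ≤ ∑ t ∈ Finset.range (p + 1), ω t} :=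
      Nat.notMem_of_lt_sInf (show parent ω i - 1 < parent ω i by omega)
    have h : parent ω i - 1 + 1 = parent ω i := by omega
    simp only [Set.mem_setOf_eq, not_le, h] at hnot
    omega

lemma parent_congr {ω ω' : ℕ → ℕ} {i : ℕ} (hi : 1 ≤ i)
    (hs : i ≤ ∑ t ∈ Finset.range i, ω t) (hag : ∀ t, t < i → ω t = ω' t) :
    parent ω i = parent ω' i := by
  have hsum : ∀ p, p ≤ i - 1 → ∑ t ∈ Finset.range (p+1), ω t = ∑ t ∈ Finset.range (p+1), ω' t := by
    intro p hp
    exact Finset.sum_congr rfl fun t ht => hag t (by simp at ht; omega)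
  have hmem : (i - 1) ∈ {p : ℕ | i ≤ ∑ t ∈ Finset.range (p + 1), ω t} := by
    have h : i - 1 + 1 = i := by omega
    simp only [Set.mem_setOf_eq, h]; exact hs
  have hmem' : (i - 1) ∈ {p : ℕ | i ≤ ∑ t ∈ Finset.range (p + 1), ω' t} := by
    simpa [Set.mem_setOf_eq, ← hsum _ le_rfl] using hmem
  have h1 : parent ω i ≤ i - 1 := Nat.sInf_le hmem
  have h1' : parent ω' i ≤ i - 1 := Nat.sInf_le hmem'
  have m1 : i ≤ ∑ t ∈ Finset.range (parent ω i + 1), ω t := Nat.sInf_mem (Set.nonempty_of_mem hmem)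
  have m1' : i ≤ ∑ t ∈ Finset.range (parent ω' i + 1), ω' t :=
    Nat.sInf_mem (Set.nonempty_of_mem hmem')
  have le1 : parent ω i ≤ parent ω' i := Nat.sInf_le (by
    simpa [Set.mem_setOf_eq, ← hsum _ h1'] using m1')
  have le2 : parent ω' i ≤ parent ω i := Nat.sInf_le (by
    simpa [Set.mem_setOf_eq, hsum _ h1] using m1)
  omega

/-- Congruence for levels: if the tree conditions hold up to `i` and two seeds agree
strictly below `i`, the level of node `i` agrees. -/
lemma level_congr : ∀ i : ℕ, ∀ {ω ω' : ℕ → ℕ},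
    (∀ j, 1 ≤ j → j ≤ i → j ≤ ∑ t ∈ Finset.range j, ω t) →
    (∀ t, t < i → ω t = ω' t) → level ω i = level ω' i := by
  intro i
  induction i using Nat.strong_induction_on with
  | _ i IH =>
    intro ω ω' hT hag
    rcases Nat.eq_zero_or_pos i with h0 | h0
    · subst h0; rw [level_zero, level_zero]
    · have hs : i ≤ ∑ t ∈ Finset.range i, ω t := hT i h0 le_rfl
      have hp : parent ω i < i := parent_lt h0 hs
      have hpe : parent ω i = parent ω' i := parent_congr h0 hs hag
      have hp' : parent ω' i < i := hpe ▸ hp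
      rw [level_succ hp, level_succ hp', ← hpe]
      have := IH (parent ω i) hp (ω := ω) (ω' := ω')
        (fun j h1 h2 => hT j h1 (by omega)) (fun t ht => hag t (by omega))
      omega

/-- Counting: among the first `k` nodes, the number of odd-level nodes is at most the
total number of children of even-level nodes among the first `k` nodes. -/
lemma card_odd_le (ω : ℕ → ℕ) (k : ℕ)
    (hT : ∀ j, 1 ≤ j → j ≤ k → j ≤ ∑ t ∈ Finset.range j, ω t) :
    ((Finset.range k).filter fun j => ¬ Even (level ω j)).card
      ≤ ∑ p ∈ (Finset.range k).filter (fun j => Even (level ω j)), ω p := by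
  classical
  set Od := (Finset.range k).filter fun j => ¬ Even (level ω j) with hOd
  set Ev := (Finset.range k).filter fun j => Even (level ω j) with hEv
  have hmaps : ∀ j ∈ Od, parent ω j ∈ Ev := by
    intro j hj
    simp only [hOd, Finset.mem_filter, Finset.mem_range] at hj
    obtain ⟨hjk, hodd⟩ := hj
    have hj1 : 1 ≤ j := by
      rcases Nat.eq_zero_or_pos j with h | h
      · exact absurd (by rw [h, level_zero]; exact Even.zero) hodd
      · exact h
    have hs := hT j hj1 (le_of_lt hjk)
    have hp : parent ω j < j := parent_lt hj1 hs
    have hlev := level_succ hp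
    simp only [hEv, Finset.mem_filter, Finset.mem_range]
    constructor
    · omega
    · rcases Nat.even_or_odd (level ω (parent ω j)) with h | h
      · exact h
      · exact absurd (by rw [hlev]; exact h.add_one) hodd
  have hcard := Finset.card_eq_sum_card_fiberwise hmaps
  rw [hcard]
  apply Finset.sum_le_sum
  intro p hp
  have hsub : (Od.filter fun j => parent ω j = p) ⊆
      Finset.Ioc (∑ t ∈ Finset.range p, ω t) (∑ t ∈ Finset.range (p+1), ω t) := by
    intro j hj
    simp only [Finset.mem_filter, hOd, Finset.mem_range] at hj
    obtain ⟨⟨hjk, hodd⟩, hpar⟩ := hj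
    have hj1 : 1 ≤ j := by
      rcases Nat.eq_zero_or_pos j with h | h
      · exact absurd (by rw [h, level_zero]; exact Even.zero) hodd
      · exact h
    have hb := parent_bounds hj1 (hT j hj1 (le_of_lt hjk))
    rw [hpar] at hb
    simp only [Finset.mem_Ioc]
    omega
  calc (Od.filter fun j => parent ω j = p).card
      ≤ (Finset.Ioc (∑ t ∈ Finset.range p, ω t) (∑ t ∈ Finset.range (p+1), ω t)).card :=
        Finset.card_le_card hsub
    _ = ω p := by rw [Nat.card_Ioc, Finset.sum_range_succ]; omega

/-! ### Chernoff-type weights -/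

/-- Truncation of a seed: coordinates `≥ j` are replaced by `1`. -/
def mask (ω : ℕ → ℕ) (j : ℕ) : ℕ → ℕ := fun t => if t < j then ω t else 1

/-- The weight attached to coordinate `j`: even-level nodes get weight `z ^ ω j`
(and weight `0` when they have exactly one child), odd-level nodes get weight `z⁻¹`. -/
noncomputable def wfun (z : ℝ≥0∞) (ω : ℕ → ℕ) (j : ℕ) : ℝ≥0∞ :=
  if Even (level (mask ω j) j) then (if ω j = 1 then 0 else z ^ ω j) else z⁻¹

noncomputable def Wt (z : ℝ≥0∞) (k : ℕ) (ω : ℕ → ℕ) : ℝ≥0∞ :=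
  ∏ j ∈ Finset.range k, wfun z ω j

lemma wfun_congr {z : ℝ≥0∞} {ω ω' : ℕ → ℕ} {j : ℕ} (hag : ∀ t, t ≤ j → ω t = ω' t) :
    wfun z ω j = wfun z ω' j := by
  have hm : mask ω j = mask ω' j := by
    funext t; unfold mask; split
    · exact hag t (by omega)
    · rfl
  unfold wfun
  rw [hm, hag j le_rfl]

lemma level_mask {ω : ℕ → ℕ} {j : ℕ}
    (hT : ∀ j', 1 ≤ j' → j' ≤ j → j' ≤ ∑ t ∈ Finset.range j', ω t) :
    level (mask ω j) j = level ω j := by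
  refine (level_congr j hT fun t ht => ?_).symm
  simp [mask, ht]

/-- Pointwise bound: on the event `Good`, the product weight is at least `1`. -/
lemma one_le_Wt {z : ℝ≥0∞} (hz1 : 1 ≤ z) (hz2 : z ≠ ⊤) {ω : ℕ → ℕ} {k : ℕ}
    (hT : ∀ j, 1 ≤ j → j ≤ k → j ≤ ∑ t ∈ Finset.range j, ω t)
    (hno : ∀ j, j < k → ¬(Even (level ω j) ∧ ω j = 1)) :
    1 ≤ Wt z k ω := by
  classical
  have hfac : ∀ j ∈ Finset.range k,
      wfun z ω j = if Even (level ω j) then z ^ ω j else z⁻¹ := by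
    intro j hj
    simp only [Finset.mem_range] at hj
    have hlm : level (mask ω j) j = level ω j :=
      level_mask (fun j' h1 h2 => hT j' h1 (by omega))
    unfold wfun
    rw [hlm]
    split
    · rename_i he
      have : ω j ≠ 1 := fun h1 => hno j hj ⟨he, h1⟩
      rw [if_neg this]
    · rfl
  rw [Wt, Finset.prod_congr rfl hfac,
    ← Finset.prod_filter_mul_prod_filter_not (Finset.range k) (fun j => Even (level ω j))]
  have h1 : ∏ j ∈ (Finset.range k).filter (fun j => Even (level ω j)),
      (if Even (level ω j) then z ^ ω j else z⁻¹)
      = z ^ (∑ j ∈ (Finset.range k).filter (fun j => Even (level ω j)), ω j) := by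
    rw [← Finset.prod_pow_eq_pow_sum]
    exact Finset.prod_congr rfl fun j hj => by
      rw [if_pos (Finset.mem_filter.mp hj).2]
  have h2 : ∏ j ∈ (Finset.range k).filter (fun j => ¬ Even (level ω j)),
      (if Even (level ω j) then z ^ ω j else z⁻¹)
      = (z⁻¹) ^ ((Finset.range k).filter (fun j => ¬ Even (level ω j))).card := by
    rw [← Finset.prod_const]
    exact Finset.prod_congr rfl fun j hj => by
      rw [if_neg (Finset.mem_filter.mp hj).2]
  rw [h1, h2]
  set c := ((Finset.range k).filter (fun j => ¬ Even (level ω j))).card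
  set S := ∑ j ∈ (Finset.range k).filter (fun j => Even (level ω j)), ω j
  have hcS : c ≤ S := card_odd_le ω k hT
  have hz0 : z ≠ 0 := fun h => by simp [h] at hz1
  calc (1 : ℝ≥0∞) = (z * z⁻¹) ^ c := by rw [ENNReal.mul_inv_cancel hz0 hz2, one_pow]
    _ = z ^ c * (z⁻¹) ^ c := mul_pow z z⁻¹ c
    _ ≤ z ^ S * (z⁻¹) ^ c := mul_le_mul_left (pow_le_pow_right₀ hz1 hcS) _

/-! ### Finite-dimensional sums -/

/-- Extension of a finite vector by `1`s. -/
def exts (k : ℕ) (x : Fin k → ℕ) : ℕ → ℕ := fun t => if h : t < k then x ⟨t, h⟩ else 1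

lemma exts_snoc_lt {k : ℕ} (x : Fin k → ℕ) (n : ℕ) {t : ℕ} (ht : t < k) :
    exts (k+1) (Fin.snoc x n) t = exts k x t := by
  simp only [exts]
  rw [dif_pos (by omega : t < k+1), dif_pos ht]
  have h : (⟨t, by omega⟩ : Fin (k+1)) = Fin.castSucc ⟨t, ht⟩ := rfl
  rw [h, Fin.snoc_castSucc]

lemma exts_snoc_last {k : ℕ} (x : Fin k → ℕ) (n : ℕ) :
    exts (k+1) (Fin.snoc x n) k = n := by
  simp only [exts]
  rw [dif_pos (by omega : k < k+1)]
  have h : (⟨k, by omega⟩ : Fin (k+1)) = Fin.last k := rfl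
  rw [h, Fin.snoc_last]

lemma pm_singleton (r : ℝ≥0) (n : ℕ) :
    (poissonMeasure r) {n} = ENNReal.ofReal (poissonPMFReal r n) := by
  rw [poissonMeasure_singleton]
  rfl

lemma pm_sum (r : ℝ≥0) : ∑' n : ℕ, (poissonMeasure r) {n} = 1 := by
  have h : ∀ n : ℕ, (poissonMeasure r) {n} = poissonPMF r n := fun n =>
    by rw [pm_singleton]; rfl
  simp only [h]
  exact (poissonPMF r).tsum_coe

noncomputable def sndEquiv (k : ℕ) : ((Fin k → ℕ) × ℕ) ≃ (Fin (k+1) → ℕ) where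
  toFun p := Fin.snoc p.1 p.2
  invFun y := (fun j => y j.castSucc, y (Fin.last k))
  left_inv p := by
    obtain ⟨x, n⟩ := p
    simp
  right_inv y := Fin.snoc_init_self y

/-- The expectation of the product weight is at most `ρ ^ k`. -/
lemma sum_key (z ρ : ℝ≥0∞) (r : ℝ≥0)
    (hφ : ∑' n : ℕ, (if n = 1 then 0 else z ^ n) * (poissonMeasure r) {n} ≤ ρ)
    (hinv : z⁻¹ ≤ ρ) :
    ∀ k : ℕ, ∑' x : Fin k → ℕ,
      Wt z k (exts k x) * ∏ j : Fin k, (poissonMeasure r) {x j} ≤ ρ ^ k := by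
  intro k
  induction k with
  | zero =>
    have : ∑' x : Fin 0 → ℕ, Wt z 0 (exts 0 x) * ∏ j : Fin 0, (poissonMeasure r) {x j}
        = 1 := by
      rw [tsum_eq_single (fun j => j.elim0) (fun b hb => absurd (funext fun j => j.elim0) hb)]
      simp [Wt]
    rw [this]; simp
  | succ k IH =>
    rw [← Equiv.tsum_eq (sndEquiv k), ENNReal.tsum_prod']
    have hstep : ∀ x : Fin k → ℕ,
        ∑' n : ℕ, Wt z (k+1) (exts (k+1) ((sndEquiv k) (x, n)))
            * ∏ j : Fin (k+1), (poissonMeasure r) {((sndEquiv k) (x, n)) j}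
        ≤ (Wt z k (exts k x) * ∏ j : Fin k, (poissonMeasure r) {x j}) * ρ := by
      intro x
      have hW : ∀ n : ℕ, Wt z (k+1) (exts (k+1) (Fin.snoc x n))
          = Wt z k (exts k x) *
            (if Even (level (mask (exts k x) k) k) then (if n = 1 then 0 else z ^ n) else z⁻¹) := by
        intro n
        rw [Wt, Finset.prod_range_succ]
        congr 1
        · exact Finset.prod_congr rfl fun j hj => wfun_congr fun t ht =>
            exts_snoc_lt x n (by simp at hj; omega)
        · unfold wfun
          have hm : mask (exts (k+1) (Fin.snoc x n)) k = mask (exts k x) k := by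
            funext t; unfold mask; split
            · exact exts_snoc_lt x n (by omega)
            · rfl
          rw [hm, exts_snoc_last]
      have hprod : ∀ n : ℕ, ∏ j : Fin (k+1), (poissonMeasure r) {(Fin.snoc x n : Fin (k+1) → ℕ) j}
          = (∏ j : Fin k, (poissonMeasure r) {x j}) * (poissonMeasure r) {n} := by
        intro n
        rw [Fin.prod_univ_castSucc]
        congr 1
        · exact Finset.prod_congr rfl fun j _ => by rw [Fin.snoc_castSucc]
        · rw [Fin.snoc_last]
      simp only [sndEquiv, Equiv.coe_fn_mk]
      calc ∑' n : ℕ, Wt z (k+1) (exts (k+1) (Fin.snoc x n))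
            * ∏ j : Fin (k+1), (poissonMeasure r) {(Fin.snoc x n : Fin (k+1) → ℕ) j}
          = (Wt z k (exts k x) * ∏ j : Fin k, (poissonMeasure r) {x j}) *
            ∑' n : ℕ, (if Even (level (mask (exts k x) k) k)
                then (if n = 1 then 0 else z ^ n) else z⁻¹) * (poissonMeasure r) {n} := by
            rw [← ENNReal.tsum_mul_left]
            exact tsum_congr fun n => by rw [hW n, hprod n]; ring
        _ ≤ (Wt z k (exts k x) * ∏ j : Fin k, (poissonMeasure r) {x j}) * ρ := by
            apply mul_le_mul_right
            split
            · exact hφ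
            · rw [ENNReal.tsum_mul_left, pm_sum, mul_one]; exact hinv
    calc ∑' (x : Fin k → ℕ) (n : ℕ), Wt z (k+1) (exts (k+1) ((sndEquiv k) (x, n)))
            * ∏ j : Fin (k+1), (poissonMeasure r) {((sndEquiv k) (x, n)) j}
        ≤ ∑' x : Fin k → ℕ,
            (Wt z k (exts k x) * ∏ j : Fin k, (poissonMeasure r) {x j}) * ρ :=
          Summable.tsum_le_tsum hstep ENNReal.summable ENNReal.summable
      _ = (∑' x : Fin k → ℕ,
            Wt z k (exts k x) * ∏ j : Fin k, (poissonMeasure r) {x j}) * ρ :=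
          ENNReal.tsum_mul_right
      _ ≤ ρ ^ k * ρ := mul_le_mul_left IH ρ
      _ = ρ ^ (k+1) := (pow_succ ρ k).symm

/-! ### Choice of the parameters -/

lemma total_sum (r : ℝ≥0) {zr : ℝ} (hzr : 0 < zr) :
    ∑' n : ℕ, (ENNReal.ofReal zr) ^ n * (poissonMeasure r) {n}
      = ENNReal.ofReal (Real.exp (r * (zr - 1))) := by
  have key : ∀ n : ℕ, (ENNReal.ofReal zr) ^ n * (poissonMeasure r) {n}
      = ENNReal.ofReal (Real.exp (r * (zr - 1)))
        * (poissonMeasure (r * zr.toNNReal)) {n} := by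
    intro n
    rw [pm_singleton, pm_singleton, ← ENNReal.ofReal_pow hzr.le,
      ← ENNReal.ofReal_mul (by positivity), ← ENNReal.ofReal_mul (Real.exp_nonneg _)]
    congr 1
    have hc : ((r * zr.toNNReal : ℝ≥0) : ℝ) = (r : ℝ) * zr := by
      push_cast [Real.coe_toNNReal _ hzr.le]; ring
    unfold poissonPMFReal
    rw [hc]
    rw [mul_pow, mul_div_assoc, mul_div_assoc, ← mul_assoc, ← mul_assoc, ← Real.exp_add,
      show ((r : ℝ) * (zr - 1) + -((r : ℝ) * zr)) = -(r : ℝ) by ring]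
    ring
  simp only [key]
  rw [ENNReal.tsum_mul_left, pm_sum, mul_one]

lemma exists_z (r : ℝ≥0) (hr : 0 < r) : ∃ zr ρr : ℝ, 1 < zr ∧ 0 < ρr ∧ ρr < 1 ∧
    (∑' n : ℕ, (if n = 1 then 0 else (ENNReal.ofReal zr) ^ n) * (poissonMeasure r) {n}
      ≤ ENNReal.ofReal ρr) ∧ (ENNReal.ofReal zr)⁻¹ ≤ ENNReal.ofReal ρr := by
  set g : ℝ → ℝ := fun x => Real.exp (r * (x - 1)) - x * (Real.exp (-(r : ℝ)) * r) with hg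
  have hcont : ContinuousAt g 1 := by fun_prop
  have hg1 : g 1 < 1 := by
    simp only [hg, sub_self, mul_zero, Real.exp_zero, one_mul]
    have : 0 < Real.exp (-(r : ℝ)) * r := by positivity
    linarith
  have hev : ∀ᶠ x in 𝓝[>] (1 : ℝ), g x < 1 :=
    (hcont.tendsto.eventually_lt_const hg1).filter_mono nhdsWithin_le_nhds
  obtain ⟨zr, hgzr, hzr1⟩ := (hev.and self_mem_nhdsWithin).exists
  have hzr0 : (0 : ℝ) < zr := by
    have : (1 : ℝ) < zr := hzr1
    linarith
  have hzr1' : (1 : ℝ) < zr := hzr1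
  refine ⟨zr, max (g zr) zr⁻¹, hzr1', lt_max_of_lt_right (by positivity), ?_, ?_, ?_⟩
  · exact max_lt hgzr (by rw [inv_lt_one_iff₀]; right; exact hzr1')
  · have htot : (ENNReal.ofReal zr) ^ 1 * (poissonMeasure r) {1}
        + ∑' n : ℕ, (if n = 1 then 0 else (ENNReal.ofReal zr) ^ n) * (poissonMeasure r) {n}
        = ENNReal.ofReal (Real.exp (r * (zr - 1))) := by
      rw [← total_sum r hzr0]
      conv_rhs => rw [ENNReal.summable.tsum_eq_add_tsum_ite' (1 : ℕ)]
      congr 1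
      refine tsum_congr fun n => ?_
      rcases eq_or_ne n 1 with h | h <;> simp [h]
    have hq : (ENNReal.ofReal zr) ^ 1 * (poissonMeasure r) {1}
        = ENNReal.ofReal (zr * (Real.exp (-(r : ℝ)) * r)) := by
      rw [pow_one, pm_singleton, ← ENNReal.ofReal_mul hzr0.le]
      congr 1
      simp [poissonPMFReal, Nat.factorial]
    have hφ : ∑' n : ℕ, (if n = 1 then 0 else (ENNReal.ofReal zr) ^ n) * (poissonMeasure r) {n}
        = ENNReal.ofReal (Real.exp (r * (zr - 1)))
          - ENNReal.ofReal (zr * (Real.exp (-(r : ℝ)) * r)) := by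
      refine ENNReal.eq_sub_of_add_eq ENNReal.ofReal_ne_top ?_
      rw [← hq, add_comm, htot]
    rw [hφ, ← ENNReal.ofReal_sub _ (by positivity)]
    exact le_trans (ENNReal.ofReal_le_ofReal (le_max_left _ _)) le_rfl
  · rw [← ENNReal.ofReal_inv_of_pos hzr0]
    exact ENNReal.ofReal_le_ofReal (le_max_right _ _)

/-! ### Events and congruence -/

/-- Node `i` (0-based) witnesses the event: the tree has at least `i+1` vertices, node `i`
is on an even level and has exactly one child. -/
def Qw (ω : ℕ → ℕ) (i : ℕ) : Prop :=
  treeAtLeast ω (i + 1) ∧ Even (level ω i) ∧ ω i = 1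

/-- The "bad" event at horizon `k`: the tree has at least `k+1` vertices and no node of
index `< k` witnesses the event. -/
def GoodE (ω : ℕ → ℕ) (k : ℕ) : Prop :=
  treeAtLeast ω (k + 1) ∧ ∀ j, j < k → ¬(Even (level ω j) ∧ ω j = 1)

lemma treeAtLeast_succ_iff {ω : ℕ → ℕ} {k : ℕ} :
    treeAtLeast ω (k + 1) ↔ ∀ j, 1 ≤ j → j ≤ k → j ≤ ∑ t ∈ Finset.range j, ω t := by
  unfold treeAtLeast
  simp

lemma Qw_congr {ω ω' : ℕ → ℕ} {i : ℕ} (hag : ∀ t, t ≤ i → ω t = ω' t) :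
    Qw ω i → Qw ω' i := by
  rintro ⟨hT, he, h1⟩
  rw [treeAtLeast_succ_iff] at hT
  have hT' : ∀ j, 1 ≤ j → j ≤ i → j ≤ ∑ t ∈ Finset.range j, ω' t := by
    intro j hj1 hj2
    have : ∑ t ∈ Finset.range j, ω' t = ∑ t ∈ Finset.range j, ω t :=
      Finset.sum_congr rfl fun t ht => (hag t (by simp at ht; omega)).symm
    rw [this]; exact hT j hj1 hj2
  refine ⟨treeAtLeast_succ_iff.mpr hT', ?_, ?_⟩
  · rwa [← level_congr i hT (fun t ht => hag t (by omega))]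
  · rw [← hag i le_rfl]; exact h1

lemma GoodE_congr {ω ω' : ℕ → ℕ} {k : ℕ} (hag : ∀ t, t < k → ω t = ω' t) :
    GoodE ω k → GoodE ω' k := by
  rintro ⟨hT, hno⟩
  rw [treeAtLeast_succ_iff] at hT
  have hT' : ∀ j, 1 ≤ j → j ≤ k → j ≤ ∑ t ∈ Finset.range j, ω' t := by
    intro j hj1 hj2
    have : ∑ t ∈ Finset.range j, ω' t = ∑ t ∈ Finset.range j, ω t :=
      Finset.sum_congr rfl fun t ht => (hag t (by simp at ht; omega)).symm
    rw [this]; exact hT j hj1 hj2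
  refine ⟨treeAtLeast_succ_iff.mpr hT', ?_⟩
  intro j hj hbad
  refine hno j hj ⟨?_, ?_⟩
  · rw [level_congr j (fun j' h1 h2 => hT j' h1 (by omega)) (fun t ht => hag t (by omega))]
    exact hbad.1
  · rw [hag j hj]; exact hbad.2

/-! ### Main theorem -/

/-- The event that some node on an even level has exactly one child (node `i+1` in
1-based numbering corresponds to 0-based index `i`) is rapidly determined over
`(λ₀, λ₁)` for every `0 ≤ λ₀ < λ₁ ≤ ∞`. -/
theorem even_level_one_child_rapidly_determined
    (P : ℝ → Measure (ℕ → ℕ)) (hP : IsPoissonSeedFamily P)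
    (A : Set (ℕ → ℕ))
    (hAdef : A = {ω | ∃ i : ℕ, treeAtLeast ω (i + 1) ∧ Even (level ω i) ∧ ω i = 1})
    (lam0 lam1 : EReal) (h0 : 0 ≤ lam0) (h01 : lam0 < lam1) :
    ∀ lam : ℝ, lam0 < (lam : EReal) → (lam : EReal) < lam1 →
      ∃ C > (0 : ℝ), ∃ c > (0 : ℝ), ∃ k₀ : ℕ, ∃ Ak : ℕ → Set (ℕ → ℕ),
        ∀ k ≥ k₀, TautDetermined k (Ak k) ∧
          P lam (symmDiff A (Ak k)) ≤ ENNReal.ofReal (C * Real.exp (-c * k)) := by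
  intro lam hl0 hl1
  -- positivity of the rate
  have hlam : (0 : ℝ) < lam := by
    have : (0 : EReal) < (lam : EReal) := lt_of_le_of_lt h0 hl0
    exact_mod_cast this
  set r : ℝ≥0 := lam.toNNReal with hr_def
  have hr : 0 < r := Real.toNNReal_pos.mpr hlam
  obtain ⟨zr, ρr, hzr1, hρ0, hρ1, hφ, hinv⟩ := exists_z r hr
  set z : ℝ≥0∞ := ENNReal.ofReal zr with hz_def
  have hz1 : (1 : ℝ≥0∞) ≤ z := by
    rw [hz_def]
    exact ENNReal.one_le_ofReal.mpr hzr1.le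
  have hz2 : z ≠ ⊤ := ENNReal.ofReal_ne_top
  refine ⟨1, one_pos, -Real.log ρr, by simpa using Real.log_neg hρ0 hρ1, 0,
    fun k => {ω | ∃ i, i < k ∧ Qw ω i}, fun k _ => ?_⟩
  have hQA : A = {ω | ∃ i : ℕ, Qw ω i} := hAdef
  constructor
  · -- tautological determination
    refine ⟨{x : Fin k → ℕ | ∃ i, i < k ∧ Qw (exts k x) i}, ?_⟩
    ext ω
    simp only [Set.mem_setOf_eq]
    have hag : ∀ i, i < k → (∀ t, t ≤ i → ω t = exts k (restrictSeed k ω) t) := by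
      intro i hi t ht
      simp only [exts, restrictSeed]
      rw [dif_pos (by omega : t < k)]
    constructor
    · rintro ⟨i, hi, hQ⟩
      exact ⟨i, hi, Qw_congr (hag i hi) hQ⟩
    · rintro ⟨i, hi, hQ⟩
      exact ⟨i, hi, Qw_congr (fun t ht => (hag i hi t ht).symm) hQ⟩
  · -- the probability bound
    -- Step 1: the symmetric difference is contained in the `GoodE` event
    have hsub : symmDiff A {ω | ∃ i, i < k ∧ Qw ω i} ⊆ {ω | GoodE ω k} := by
      intro ω hω
      rw [symmDiff_def] at hω
      have hAk_sub : {ω : ℕ → ℕ | ∃ i, i < k ∧ Qw ω i} ⊆ A := by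
        rw [hQA]; rintro ω' ⟨i, _, hQ⟩; exact ⟨i, hQ⟩
      rcases hω with hω | hω
      · obtain ⟨hA, hnAk⟩ := hω
        rw [hQA] at hA
        obtain ⟨i, hQ⟩ := hA
        have hnAk' : ∀ i, i < k → ¬ Qw ω i := by
          intro i hi hQ'
          exact hnAk ⟨i, hi, hQ'⟩
        have hik : k ≤ i := by
          by_contra h
          exact hnAk' i (by omega) hQ
        have hTi := treeAtLeast_succ_iff.mp hQ.1
        constructor
        · exact treeAtLeast_succ_iff.mpr fun j h1 h2 => hTi j h1 (by omega)
        · intro j hj hbad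
          refine hnAk' j hj ⟨treeAtLeast_succ_iff.mpr fun j' h1 h2 => hTi j' h1 (by omega),
            hbad.1, hbad.2⟩
      · exact absurd (hAk_sub hω.1) hω.2
    -- Step 2: the `GoodE` event is a preimage of a finite-dimensional set
    set B : Set (Fin k → ℕ) := {x | GoodE (exts k x) k} with hB_def
    have hpre : {ω | GoodE ω k} = restrictSeed k ⁻¹' B := by
      ext ω
      simp only [Set.mem_setOf_eq, Set.mem_preimage, hB_def]
      have hag : ∀ t, t < k → ω t = exts k (restrictSeed k ω) t := by
        intro t ht
        simp only [exts, restrictSeed]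
        rw [dif_pos ht]
      exact ⟨fun h => GoodE_congr hag h, fun h => GoodE_congr (fun t ht => (hag t ht).symm) h⟩
    have hmeasB : MeasurableSet B := (Set.to_countable B).measurableSet
    have hmeas_res : Measurable (restrictSeed k) :=
      measurable_pi_lambda _ fun j => measurable_pi_apply _
    -- Step 3: compute via the product measure
    have hmap := (hP lam hlam).2 k
    have hμB : P lam (restrictSeed k ⁻¹' B)
        = Measure.pi (fun _ : Fin k => poissonMeasure r) B := by
      rw [← Measure.map_apply hmeas_res hmeasB, hr_def]
      exact congrFun (congrArg _ hmap) B
    -- Step 4: bound the product measure of `B`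
    set μk := Measure.pi (fun _ : Fin k => poissonMeasure r) with hμk_def
    have hsing : ∀ x : Fin k → ℕ, μk {x} = ∏ j : Fin k, (poissonMeasure r) {x j} := by
      intro x
      rw [show ({x} : Set (Fin k → ℕ)) = Set.pi Set.univ (fun j => {x j}) from
        (Set.univ_pi_singleton x).symm, hμk_def, Measure.pi_pi]
    have hBsum : μk B = ∑' x : B, μk {(x : Fin k → ℕ)} := by
      have h := tsum_measure_preimage_singleton (μ := μk) (Set.to_countable B)
        (f := id) (fun y _ => measurableSet_singleton y)
      simpa using h.symm
    have hbound : μk B ≤ ENNReal.ofReal ρr ^ k := by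
      rw [hBsum]
      calc ∑' x : B, μk {(x : Fin k → ℕ)}
          ≤ ∑' x : B, Wt z k (exts k (x : Fin k → ℕ))
              * ∏ j : Fin k, (poissonMeasure r) {(x : Fin k → ℕ) j} := by
            refine Summable.tsum_le_tsum (fun x => ?_) ENNReal.summable ENNReal.summable
            rw [hsing]
            have hGood : GoodE (exts k (x : Fin k → ℕ)) k := x.2
            have hW : 1 ≤ Wt z k (exts k (x : Fin k → ℕ)) :=
              one_le_Wt hz1 hz2 (treeAtLeast_succ_iff.mp hGood.1) hGood.2
            calc ∏ j : Fin k, (poissonMeasure r) {(x : Fin k → ℕ) j}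
                = 1 * ∏ j : Fin k, (poissonMeasure r) {(x : Fin k → ℕ) j} := (one_mul _).symm
              _ ≤ _ := mul_le_mul_left hW _
        _ ≤ ∑' x : Fin k → ℕ, Wt z k (exts k x)
              * ∏ j : Fin k, (poissonMeasure r) {x j} :=
            ENNReal.tsum_comp_le_tsum_of_injective Subtype.val_injective _
        _ ≤ (ENNReal.ofReal ρr) ^ k := sum_key z (ENNReal.ofReal ρr) r hφ hinv k
    -- Step 5: put everything together
    calc P lam (symmDiff A {ω | ∃ i, i < k ∧ Qw ω i})
        ≤ P lam {ω | GoodE ω k} := measure_mono hsub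
      _ = μk B := by rw [hpre, hμB]
      _ ≤ ENNReal.ofReal ρr ^ k := hbound
      _ = ENNReal.ofReal (1 * Real.exp (-(-Real.log ρr) * k)) := by
          rw [one_mul, neg_neg, mul_comm (Real.log ρr) (k : ℝ), Real.exp_nat_mul,
            Real.exp_log hρ0, ← ENNReal.ofReal_pow hρ0.le]
end

section
/- Let F ⊆ ℕ be an arbitrary set of levels. Let A = {ω ∈ ℕ^ℕ : there exists i ≥ 1 such that the tree encoded by ω has at least i vertices, node i lies on an even level, and ω_i = 1}, and let B = {ω ∈ ℕ^ℕ : there exists i ≥ 1 such that the tree encoded by ω has at least i vertices, the level of node i belongs to F, and ω_i = 2}. Then A ∪ B is rapidly determined over the interval (λ₀, λ₁) for every 0 ≤ λ₀ < λ₁ ≤ ∞. -/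
open MeasureTheory ProbabilityTheory Filter Topology

namespace RapidAux

open Finset Real
open scoped Classical ENNReal NNReal Nat

/-! ### Deterministic tree lemmas -/

lemma treeAtLeast_mono {ω : ℕ → ℕ} {k m : ℕ} (h : treeAtLeast ω k) (hm : m ≤ k) :
    treeAtLeast ω m := fun j h1 h2 => h j h1 (h2.trans (Nat.sub_le_sub_right hm 1))

lemma treeAtLeast_congr {ω ω' : ℕ → ℕ} {i : ℕ} (h : ∀ j < i, ω j = ω' j) :
    treeAtLeast ω (i + 1) ↔ treeAtLeast ω' (i + 1) := by
  have key : ∀ j ≤ i, ∑ t ∈ Finset.range j, ω t = ∑ t ∈ Finset.range j, ω' t := by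
    intro j hj
    exact Finset.sum_congr rfl fun t ht => h t (lt_of_lt_of_le (Finset.mem_range.1 ht) hj)
  constructor <;> intro hT j h1 h2
  · rw [← key j (by simpa using h2)]; exact hT j h1 h2
  · rw [key j (by simpa using h2)]; exact hT j h1 h2

lemma level_zero (ω : ℕ → ℕ) : level ω 0 = 0 := by
  rw [level]
  simp

lemma parent_lt {ω : ℕ → ℕ} {i : ℕ} (h1 : 1 ≤ i) (h2 : i ≤ ∑ t ∈ Finset.range i, ω t) :
    parent ω i < i := by
  have hmem : i - 1 ∈ {p : ℕ | i ≤ ∑ t ∈ Finset.range (p + 1), ω t} := by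
    simpa [Nat.sub_add_cancel h1] using h2
  exact lt_of_le_of_lt (Nat.sInf_le hmem) (Nat.sub_lt h1 one_pos)

lemma parent_mem {ω : ℕ → ℕ} {i : ℕ} (h1 : 1 ≤ i) (h2 : i ≤ ∑ t ∈ Finset.range i, ω t) :
    i ≤ ∑ t ∈ Finset.range (parent ω i + 1), ω t := by
  have hne : {p : ℕ | i ≤ ∑ t ∈ Finset.range (p + 1), ω t}.Nonempty := by
    exact ⟨i - 1, by simpa [Nat.sub_add_cancel h1] using h2⟩
  exact Nat.sInf_mem hne

lemma parent_gt {ω : ℕ → ℕ} {i : ℕ} (h1 : 1 ≤ i) :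
    ∑ t ∈ Finset.range (parent ω i), ω t < i := by
  rcases Nat.eq_zero_or_pos (parent ω i) with h | h
  · simpa [h] using (show 0 < i by omega)
  · have : parent ω i - 1 ∉ {p : ℕ | i ≤ ∑ t ∈ Finset.range (p + 1), ω t} :=
      Nat.notMem_of_lt_sInf (Nat.sub_lt h one_pos)
    simp only [Set.mem_setOf_eq, not_le, Nat.sub_add_cancel h] at this
    exact this

lemma parent_congr {ω ω' : ℕ → ℕ} {i : ℕ} (h : ∀ j < i, ω j = ω' j) (h1 : 1 ≤ i)
    (h2 : i ≤ ∑ t ∈ Finset.range i, ω t) : parent ω i = parent ω' i := by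
  have key : ∀ p < i, (i ≤ ∑ t ∈ Finset.range (p + 1), ω t ↔
      i ≤ ∑ t ∈ Finset.range (p + 1), ω' t) := by
    intro p hp
    rw [Finset.sum_congr rfl fun t ht => h t (lt_of_le_of_lt (Nat.lt_succ_iff.1
      (Finset.mem_range.1 ht)) hp)]
  have h2' : i ≤ ∑ t ∈ Finset.range i, ω' t := by
    rwa [← Finset.sum_congr rfl fun t ht => h t (Finset.mem_range.1 ht)]
  have hlt := parent_lt h1 h2
  have hlt' := parent_lt (ω := ω') h1 h2'
  have m1 : parent ω i ∈ {p : ℕ | i ≤ ∑ t ∈ Finset.range (p + 1), ω' t} := by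
    exact (key _ hlt).1 (parent_mem h1 h2)
  have m2 : parent ω' i ∈ {p : ℕ | i ≤ ∑ t ∈ Finset.range (p + 1), ω t} := by
    exact (key _ hlt').2 (parent_mem h1 h2')
  exact le_antisymm (Nat.sInf_le m2) (Nat.sInf_le m1)

lemma level_succ {ω : ℕ → ℕ} {i : ℕ} (h : parent ω i < i) :
    level ω i = level ω (parent ω i) + 1 := by
  rw [level]; rw [dif_pos h]

lemma level_congr {ω ω' : ℕ → ℕ} : ∀ i : ℕ, (∀ j < i, ω j = ω' j) →
    treeAtLeast ω (i + 1) → level ω i = level ω' i := by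
  intro i
  induction i using Nat.strong_induction_on with
  | _ i ih =>
    intro hagree hT
    rcases Nat.eq_zero_or_pos i with rfl | hi
    · rw [level_zero, level_zero]
    · have h2 : i ≤ ∑ t ∈ Finset.range i, ω t := hT i hi (by simp)
      have h2' : i ≤ ∑ t ∈ Finset.range i, ω' t := by
        rwa [← Finset.sum_congr rfl fun t ht => hagree t (Finset.mem_range.1 ht)]
      have hpeq := parent_congr hagree hi h2
      have hplt : parent ω i < i := parent_lt hi h2
      have hplt' : parent ω' i < i := by rw [← hpeq]; exact hplt
      rw [level_succ hplt, level_succ hplt', ← hpeq]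
      congr 1
      exact ih _ hplt (fun j hj => hagree j (hj.trans hplt))
        (treeAtLeast_mono hT (by omega))

/-- The counting lemma: if the tree has at least `k+1` vertices then among the first `k`
nodes, the even-level ones together with their total number of children dominate `k`. -/
lemma tree_counting {ω : ℕ → ℕ} {k : ℕ} (h : treeAtLeast ω (k + 1)) :
    k ≤ ((Finset.range k).filter fun i => Even (level ω i)).card
        + ∑ p ∈ (Finset.range k).filter fun i => Even (level ω i), ω p := by
  set S := (Finset.range k).filter fun i => Even (level ω i) with hS
  set O := (Finset.range k).filter fun i => ¬ Even (level ω i) with hO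
  have hcard : S.card + O.card = k := by
    rw [hS, hO, Finset.card_filter_add_card_filter_not, Finset.card_range]
  have hsum : ∀ j : ℕ, 1 ≤ j → j ≤ k → j ≤ ∑ t ∈ Finset.range j, ω t := fun j h1 h2 =>
    h j h1 (by simpa using h2)
  have hOsub : O ⊆ S.biUnion fun p =>
      Finset.Ioc (∑ t ∈ Finset.range p, ω t) (∑ t ∈ Finset.range (p + 1), ω t) := by
    intro i hi
    rw [hO, Finset.mem_filter, Finset.mem_range] at hi
    obtain ⟨hik, hodd⟩ := hi
    have hi1 : 1 ≤ i := by
      rcases Nat.eq_zero_or_pos i with rfl | h; · exact absurd (by simp [level_zero]) hodd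
      · exact h
    have h2 : i ≤ ∑ t ∈ Finset.range i, ω t := hsum i hi1 hik.le
    have hplt : parent ω i < i := parent_lt hi1 h2
    refine Finset.mem_biUnion.2 ⟨parent ω i, ?_, ?_⟩
    · rw [hS, Finset.mem_filter, Finset.mem_range]
      refine ⟨hplt.trans hik, ?_⟩
      have := level_succ hplt
      rcases Nat.even_or_odd (level ω (parent ω i)) with he | hodd'
      · exact he
      · exact absurd (by rw [this]; exact hodd'.add_one) hodd
    · rw [Finset.mem_Ioc]
      exact ⟨parent_gt hi1, parent_mem hi1 h2⟩
  have hOcard : O.card ≤ ∑ p ∈ S, ω p := by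
    refine (Finset.card_le_card hOsub).trans ?_
    refine Finset.card_biUnion_le.trans (Finset.sum_le_sum fun p _ => ?_)
    rw [Nat.card_Ioc]
    rw [Finset.sum_range_succ]
    omega
  omega


/-! ### Prefixes and the adapted condition -/

/-- Extension of a finite tuple by zeros. -/
def ext (i : ℕ) (y : Fin i → ℕ) : ℕ → ℕ := fun m => if h : m < i then y ⟨m, h⟩ else 0

lemma ext_agree (i : ℕ) (ω : ℕ → ℕ) : ∀ j < i, ext i (fun q : Fin i => ω q.1) j = ω j := by
  intro j hj; simp [ext, hj]

/-- The prefix of length `i.1` of a tuple of length `k`. -/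
def pre {k : ℕ} (x : Fin k → ℕ) (i : Fin k) : Fin i.1 → ℕ := fun j => x ⟨j.1, j.2.trans i.2⟩

/-- The adapted condition: node `i` exists and lies on an even level, expressed as a
predicate of the first `i` coordinates only. -/
def condEA (i : ℕ) (y : Fin i → ℕ) : Prop :=
  treeAtLeast (ext i y) (i + 1) ∧ Even (level (ext i y) i)

lemma condEA_iff (ω : ℕ → ℕ) (i : ℕ) :
    condEA i (fun j : Fin i => ω j.1) ↔ treeAtLeast ω (i + 1) ∧ Even (level ω i) := by
  have hagree := ext_agree i ω
  have hT := treeAtLeast_congr (ω := ext i fun q : Fin i => ω q.1) (ω' := ω) hagree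
  constructor
  · rintro ⟨h1, h2⟩
    refine ⟨hT.1 h1, ?_⟩
    rwa [level_congr i hagree h1] at h2
  · rintro ⟨h1, h2⟩
    refine ⟨hT.2 h1, ?_⟩
    rwa [level_congr i hagree (hT.2 h1)]

/-- The bad event on the first `k` coordinates: the tree has at least `k+1` vertices but
no even-level node among the first `k` has exactly one child. -/
def badSet (k : ℕ) : Set (Fin k → ℕ) :=
  {x | treeAtLeast (ext k x) (k + 1) ∧ ∀ i : Fin k, condEA i.1 (pre x i) → x i ≠ 1}

/-- The per-node weight. -/
noncomputable def Gf (t : ℝ) (n : ℕ) : ℝ≥0∞ :=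
  if n = 1 then 0 else (ENNReal.ofReal t) ^ (n + 1)

lemma pre_ext (k : ℕ) (x : Fin k → ℕ) (i : Fin k) :
    pre x i = fun j : Fin i.1 => (ext k x) j.1 := by
  funext j
  simp only [pre, ext]
  rw [dif_pos (j.2.trans i.2)]

lemma bad_pointwise {t : ℝ} (ht : 1 ≤ t) {k : ℕ} {x : Fin k → ℕ} (hx : x ∈ badSet k) :
    ENNReal.ofReal t ^ k ≤ ∏ i : Fin k, (if condEA i.1 (pre x i) then Gf t (x i) else 1) := by
  obtain ⟨hT, hno⟩ := hx
  set ω := ext k x with hω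
  set θ := ENNReal.ofReal t with hθ
  have hθ1 : 1 ≤ θ := by
    rw [hθ, ← ENNReal.ofReal_one]
    exact ENNReal.ofReal_le_ofReal ht
  have hcond : ∀ i : Fin k, condEA i.1 (pre x i) ↔ Even (level ω i.1) := by
    intro i
    rw [pre_ext k x i, condEA_iff]
    exact and_iff_right (treeAtLeast_mono hT (by omega))
  have hxi : ∀ i : Fin k, x i = ω i.1 := by
    intro i; simp [hω, ext]
  have step1 : ∏ i : Fin k, (if condEA i.1 (pre x i) then Gf t (x i) else 1)
      = ∏ i : Fin k, (if Even (level ω i.1) then θ ^ (ω i.1 + 1) else 1) := by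
    refine Finset.prod_congr rfl fun i _ => ?_
    rw [if_congr (hcond i) rfl rfl]
    by_cases h : Even (level ω i.1)
    · rw [if_pos h, if_pos h, hxi i, Gf, if_neg]
      have := hno i ((hcond i).2 h)
      rw [hxi i] at this; exact this
    · rw [if_neg h, if_neg h]
  rw [step1]
  rw [Fin.prod_univ_eq_prod_range (fun m => if Even (level ω m) then θ ^ (ω m + 1) else 1) k]
  rw [← Finset.prod_filter]
  rw [Finset.prod_pow_eq_pow_sum]
  refine pow_le_pow_right' hθ1 ?_
  have := tree_counting hT
  rw [Finset.sum_add_distrib, Finset.sum_const, smul_eq_mul, mul_one]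
  omega


lemma insert_lt {k : ℕ} (a : ℕ) (x : Fin k → ℕ) (m : ℕ) (h : m < k + 1) (h' : m < k) :
    Fin.insertNth (α := fun _ : Fin (k + 1) => ℕ) (Fin.last k) a x ⟨m, h⟩ = x ⟨m, h'⟩ := by
  have hm : (⟨m, h⟩ : Fin (k + 1)) = Fin.castSucc ⟨m, h'⟩ := rfl
  rw [hm, ← Fin.succAbove_last]
  exact Fin.insertNth_apply_succAbove _ _ _ _

lemma seq_bound (μ0 : Measure ℕ) [IsProbabilityMeasure μ0]
    (G : ℕ → ℝ≥0∞) (cond : ∀ i : ℕ, (Fin i → ℕ) → Prop) :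
    ∀ k : ℕ, ∫⁻ x, ∏ i : Fin k, (if cond i.1 (pre x i) then G (x i) else 1)
        ∂(Measure.pi fun _ : Fin k => μ0) ≤ (max 1 (∫⁻ n, G n ∂μ0)) ^ k := by
  intro k
  induction k with
  | zero => simp
  | succ k ih =>
    set EG := ∫⁻ n, G n ∂μ0 with hEG
    set M := max 1 EG with hM
    set ν := Measure.pi fun _ : Fin k => μ0 with hν
    set F : (Fin (k + 1) → ℕ) → ℝ≥0∞ :=
      fun x => ∏ i : Fin (k + 1), (if cond i.1 (pre x i) then G (x i) else 1) with hF
    set W : (Fin k → ℕ) → ℝ≥0∞ :=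
      fun x => ∏ i : Fin k, (if cond i.1 (pre x i) then G (x i) else 1) with hW
    have hFmeas : Measurable F := measurable_of_countable F
    have hWmeas : Measurable W := measurable_of_countable W
    have hsplit : ∀ (a : ℕ) (x : Fin k → ℕ),
        F (Fin.insertNth (α := fun _ : Fin (k + 1) => ℕ) (Fin.last k) a x) = W x * (if cond k x then G a else 1) := by
      intro a x
      rw [hF]
      simp only []
      rw [Fin.prod_univ_castSucc]
      congr 1
      · refine Finset.prod_congr rfl fun i _ => ?_
        have h1 : Fin.insertNth (α := fun _ : Fin (k + 1) => ℕ) (Fin.last k) a x (Fin.castSucc i) = x i := by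
          rw [← Fin.succAbove_last]; exact Fin.insertNth_apply_succAbove _ _ _ _
        have h2 : pre (Fin.insertNth (α := fun _ : Fin (k + 1) => ℕ) (Fin.last k) a x) (Fin.castSucc i) = pre x i := by
          funext j
          exact insert_lt a x j.1 _ (j.2.trans i.2)
        simp only [Fin.coe_castSucc]
        rw [h1, h2]
      · have h1 : Fin.insertNth (α := fun _ : Fin (k + 1) => ℕ) (Fin.last k) a x (Fin.last k) = a :=
          Fin.insertNth_apply_same _ _ _
        have h2 : pre (Fin.insertNth (α := fun _ : Fin (k + 1) => ℕ) (Fin.last k) a x) (Fin.last k) = x := by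
          funext j
          exact insert_lt a x j.1 _ j.2
        have h3 : (Fin.last k).1 = k := rfl
        rw [h1]
        rw [show (if cond (Fin.last k).1 (pre (Fin.insertNth (α := fun _ : Fin (k + 1) => ℕ) (Fin.last k) a x) (Fin.last k))
            then G a else 1) = (if cond k x then G a else 1) from if_congr (by rw [h2]; exact Iff.rfl) rfl rfl]
    have hmp := (measurePreserving_piFinSuccAbove (fun _ : Fin (k + 1) => μ0) (Fin.last k)).symm
    calc ∫⁻ x, F x ∂(Measure.pi fun _ : Fin (k + 1) => μ0)
        = ∫⁻ z, F ((MeasurableEquiv.piFinSuccAbove (fun _ : Fin (k + 1) => ℕ)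
            (Fin.last k)).symm z) ∂(μ0.prod ν) := (hmp.lintegral_comp hFmeas).symm
      _ = ∫⁻ z : ℕ × (Fin k → ℕ), W z.2 * (if cond k z.2 then G z.1 else 1) ∂(μ0.prod ν) := by
          refine lintegral_congr fun z => ?_
          have : (MeasurableEquiv.piFinSuccAbove (fun _ : Fin (k + 1) => ℕ)
              (Fin.last k)).symm z = Fin.insertNth (α := fun _ : Fin (k + 1) => ℕ) (Fin.last k) z.1 z.2 := rfl
          rw [this, hsplit]
      _ = ∫⁻ a, ∫⁻ x, W x * (if cond k x then G a else 1) ∂ν ∂μ0 := by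
          rw [lintegral_prod]
          exact (measurable_of_countable _).aemeasurable
      _ = ∫⁻ x, ∫⁻ a, W x * (if cond k x then G a else 1) ∂μ0 ∂ν := by
          rw [lintegral_lintegral_swap]
          exact (measurable_of_countable _).aemeasurable
      _ ≤ ∫⁻ x, W x * M ∂ν := by
          refine lintegral_mono fun x => ?_
          rw [lintegral_const_mul _ (measurable_of_countable _)]
          refine mul_le_mul_right ?_ _
          by_cases h : cond k x
          · simp only [h, if_true]
            rw [hM]; exact le_max_right _ _
          · simp only [h, if_false]
            rw [lintegral_const, measure_univ, mul_one, hM]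
            exact le_max_left _ _
      _ = M * ∫⁻ x, W x ∂ν := by
          rw [← lintegral_const_mul _ hWmeas]
          exact lintegral_congr fun x => mul_comm _ _
      _ ≤ M * M ^ k := mul_le_mul_right ih _
      _ = M ^ (k + 1) := (pow_succ' M k).symm


noncomputable def pw (l : ℝ) : ℝ := l * Real.exp (-l)
noncomputable def dl (l : ℝ) : ℝ := Real.exp (-l) / (4 * (1 + l))
noncomputable def tl (l : ℝ) : ℝ := 1 + dl l
noncomputable def rhol (l : ℝ) : ℝ := max (1 / tl l) (1 - pw l / 2)

variable {l : ℝ}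

lemma pw_pos (hl : 0 < l) : 0 < pw l := mul_pos hl (exp_pos _)

lemma pw_lt_two (hl : 0 < l) : pw l < 2 := by
  have h1 : l < Real.exp l := by
    have := Real.add_one_le_exp l
    nlinarith
  have h2 : pw l < 1 := by
    rw [pw, Real.exp_neg]
    rw [mul_inv_lt_iff₀ (exp_pos _), one_mul]
    exact h1
  linarith

lemma dl_pos (hl : 0 < l) : 0 < dl l := div_pos (exp_pos _) (by nlinarith)

lemma one_lt_tl (hl : 0 < l) : 1 < tl l := by
  have := dl_pos hl; rw [tl]; linarith

lemma rhol_pos (hl : 0 < l) : 0 < rhol l :=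
  lt_max_of_lt_left (div_pos one_pos (by linarith [one_lt_tl hl]))

lemma rhol_lt_one (hl : 0 < l) : rhol l < 1 := by
  refine max_lt ?_ ?_
  · rw [div_lt_one (by linarith [one_lt_tl hl])]
    exact one_lt_tl hl
  · linarith [pw_pos hl]

lemma one_le_tl_mul_rhol (hl : 0 < l) : 1 ≤ tl l * rhol l := by
  have ht : 0 < tl l := by linarith [one_lt_tl hl]
  calc (1 : ℝ) = tl l * (1 / tl l) := by field_simp
    _ ≤ tl l * rhol l := by
        exact mul_le_mul_of_nonneg_left (le_max_left _ _) ht.le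

lemma key_real (hl : 0 < l) : Real.exp (l * dl l) ≤ 1 + pw l / 2 := by
  set u := l * dl l with hu
  have hu0 : 0 ≤ u := by
    have := dl_pos hl; positivity
  have he : Real.exp (-l) ≤ 1 := by
    rw [Real.exp_le_one_iff]; linarith
  have h1l : (0:ℝ) < 1 + l := by linarith
  have hul : u ≤ 1 / 2 := by
    rw [hu, dl]
    have heq : l * (Real.exp (-l) / (4 * (1 + l))) = l * Real.exp (-l) / (4 * (1 + l)) := by
      ring
    rw [heq, div_le_iff₀ (by nlinarith)]
    nlinarith [Real.exp_pos (-l)]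
  have hexp : Real.exp u * (1 - u) ≤ 1 := by
    have h1 : 1 - u ≤ Real.exp (-u) := by
      have := Real.add_one_le_exp (-u); linarith
    calc Real.exp u * (1 - u) ≤ Real.exp u * Real.exp (-u) :=
          mul_le_mul_of_nonneg_left h1 (exp_pos _).le
      _ = 1 := by rw [← Real.exp_add]; simp
  have h2u : Real.exp u ≤ 1 + 2 * u := by
    nlinarith [exp_pos u]
  have hfin : 2 * u ≤ pw l / 2 := by
    rw [hu, dl, pw]
    have heq : 2 * (l * (Real.exp (-l) / (4 * (1 + l)))) = l * Real.exp (-l) / (2 * (1 + l)) := by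
      field_simp
      ring
    rw [heq]
    gcongr
    nlinarith
  linarith

lemma tsum_fpmf_le (hl : 0 < l) :
    ∑' n : ℕ, (if n = 1 then 0 else (tl l) ^ (n + 1) * poissonPMFReal l.toNNReal n)
      ≤ tl l * rhol l := by
  have hcoe : ((l.toNNReal : ℝ)) = l := Real.coe_toNNReal _ hl.le
  set t := tl l with hts
  have ht0 : 0 < t := by rw [hts]; linarith [one_lt_tl hl]
  have hg : HasSum (fun n : ℕ => t ^ (n + 1) * poissonPMFReal l.toNNReal n)
      (t * Real.exp (-l) * Real.exp (t * l)) := by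
    have h0 : HasSum (fun n : ℕ => (t * l) ^ n / n !) (Real.exp (t * l)) := by
      rw [Real.exp_eq_exp_ℝ]
      exact NormedSpace.expSeries_div_hasSum_exp (t * l)
    have h1 := h0.mul_left (t * Real.exp (-l))
    refine h1.congr_fun fun n => ?_
    unfold poissonPMFReal
    rw [hcoe, mul_pow]
    ring
  have hh : HasSum (fun n : ℕ => if n = 1 then t ^ 2 * poissonPMFReal l.toNNReal 1 else 0)
      (t ^ 2 * poissonPMFReal l.toNNReal 1) := hasSum_ite_eq 1 _
  have hf : HasSum (fun n : ℕ => if n = 1 then 0 else t ^ (n + 1) * poissonPMFReal l.toNNReal n)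
      (t * Real.exp (-l) * Real.exp (t * l) - t ^ 2 * poissonPMFReal l.toNNReal 1) := by
    refine (hg.sub hh).congr_fun fun n => ?_
    by_cases h : n = 1
    · subst h; simp
    · simp [h]
  rw [hf.tsum_eq]
  have hpmf1 : poissonPMFReal l.toNNReal 1 = Real.exp (-l) * l := by
    unfold poissonPMFReal
    rw [hcoe]; simp
  rw [hpmf1]
  have hexp : Real.exp (-l) * Real.exp (t * l) = Real.exp (l * dl l) := by
    rw [← Real.exp_add]
    congr 1
    rw [hts, tl]; ring
  have hkey := key_real hl
  have hrho : 1 - pw l / 2 ≤ rhol l := le_max_right _ _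
  have hgoal : t * (Real.exp (-l) * Real.exp (t * l)) - t ^ 2 * (Real.exp (-l) * l)
      ≤ t * rhol l := by
    rw [hexp]
    have hp : Real.exp (-l) * l = pw l := by rw [pw]; ring
    rw [hp]
    have h1 : Real.exp (l * dl l) - t * pw l ≤ 1 - pw l / 2 := by
      have ht1 : 1 ≤ t := by rw [hts]; linarith [one_lt_tl hl]
      have hpw := pw_pos hl
      nlinarith
    calc t * Real.exp (l * dl l) - t ^ 2 * pw l = t * (Real.exp (l * dl l) - t * pw l) := by ring
      _ ≤ t * (1 - pw l / 2) := by
          exact mul_le_mul_of_nonneg_left h1 ht0.le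
      _ ≤ t * rhol l := mul_le_mul_of_nonneg_left hrho ht0.le
  calc t * Real.exp (-l) * Real.exp (t * l) - t ^ 2 * (Real.exp (-l) * l)
      = t * (Real.exp (-l) * Real.exp (t * l)) - t ^ 2 * (Real.exp (-l) * l) := by ring
    _ ≤ t * rhol l := hgoal

lemma lintegral_Gf_le (hl : 0 < l) :
    ∫⁻ n, Gf (tl l) n ∂(poissonMeasure l.toNNReal) ≤ ENNReal.ofReal (tl l * rhol l) := by
  have hcoe : ((l.toNNReal : ℝ)) = l := Real.coe_toNNReal _ hl.le
  set t := tl l with hts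
  have ht0 : 0 < t := by rw [hts]; linarith [one_lt_tl hl]
  rw [lintegral_countable']
  have hsingle : ∀ n : ℕ, poissonMeasure l.toNNReal {n}
      = ENNReal.ofReal (poissonPMFReal l.toNNReal n) := by
    intro n
    rw [poissonMeasure_singleton]
    rfl
  have hterm : ∀ n : ℕ, Gf t n * poissonMeasure l.toNNReal {n}
      = ENNReal.ofReal (if n = 1 then 0 else t ^ (n + 1) * poissonPMFReal l.toNNReal n) := by
    intro n
    rw [hsingle, Gf]
    by_cases h : n = 1
    · simp [h]
    · rw [if_neg h, if_neg h, ← ENNReal.ofReal_pow ht0.le, ← ENNReal.ofReal_mul (by positivity)]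
  rw [tsum_congr hterm]
  have hsum : Summable (fun n : ℕ =>
      if n = 1 then 0 else t ^ (n + 1) * poissonPMFReal l.toNNReal n) := by
    have hg : Summable (fun n : ℕ => (t * Real.exp (-l)) * ((t * l) ^ n / n !)) :=
      (Real.summable_pow_div_factorial (t * l)).mul_left _
    refine hg.of_nonneg_of_le ?_ ?_
    · intro n
      by_cases h : n = 1
      · simp [h]
      · rw [if_neg h]
        exact mul_nonneg (pow_nonneg ht0.le _) poissonPMFReal_nonneg
    · intro n
      by_cases h : n = 1
      · rw [if_pos h]
        have h1 : (0:ℝ) ≤ t * Real.exp (-l) := by positivity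
        have h2 : (0:ℝ) ≤ (t * l) ^ n / n ! := by positivity
        positivity
      · rw [if_neg h]
        unfold poissonPMFReal
        rw [hcoe, mul_pow]
        apply le_of_eq
        ring
  have hnn : ∀ n : ℕ, 0 ≤ (if n = 1 then 0 else t ^ (n + 1) * poissonPMFReal l.toNNReal n) := by
    intro n
    by_cases h : n = 1
    · simp [h]
    · rw [if_neg h]
      exact mul_nonneg (pow_nonneg ht0.le _) poissonPMFReal_nonneg
  calc (∑' n : ℕ, ENNReal.ofReal (if n = 1 then 0 else t ^ (n + 1) * poissonPMFReal l.toNNReal n))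
      = ENNReal.ofReal (∑' n : ℕ, (if n = 1 then 0 else t ^ (n + 1) * poissonPMFReal l.toNNReal n)) :=
        (ENNReal.ofReal_tsum_of_nonneg hnn hsum).symm
    _ ≤ ENNReal.ofReal (tl l * rhol l) := ENNReal.ofReal_le_ofReal (tsum_fpmf_le hl)


/-! ### The product-measure bound for the bad event -/

lemma pi_bad_le (l : ℝ) (hl : 0 < l) (k : ℕ) :
    Measure.pi (fun _ : Fin k => poissonMeasure l.toNNReal) (badSet k)
      ≤ ENNReal.ofReal (rhol l ^ k) := by
  set ν := Measure.pi (fun _ : Fin k => poissonMeasure l.toNNReal) with hν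
  set t := tl l with hts
  have ht1 : (1:ℝ) ≤ t := (one_lt_tl hl).le
  have ht0 : (0:ℝ) < t := lt_of_lt_of_le one_pos ht1
  set θ := ENNReal.ofReal t with hθ
  set W : (Fin k → ℕ) → ℝ≥0∞ :=
    fun x => ∏ i : Fin k, (if condEA i.1 (pre x i) then Gf t (x i) else 1) with hWdef
  have hmeasBad : MeasurableSet (badSet k) := (Set.to_countable _).measurableSet
  have h1 : θ ^ k * ν (badSet k) ≤ ∫⁻ x, W x ∂ν := by
    rw [← lintegral_indicator_const hmeasBad]
    refine lintegral_mono fun x => ?_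
    by_cases hx : x ∈ badSet k
    · rw [Set.indicator_of_mem hx]; exact bad_pointwise ht1 hx
    · rw [Set.indicator_of_notMem hx]; exact zero_le
  have h2 : ∫⁻ x, W x ∂ν ≤ (max 1 (∫⁻ n, Gf t n ∂(poissonMeasure l.toNNReal))) ^ k :=
    seq_bound _ _ _ k
  have h3 : (max 1 (∫⁻ n, Gf t n ∂(poissonMeasure l.toNNReal)))
      ≤ ENNReal.ofReal (t * rhol l) := by
    refine max_le ?_ (lintegral_Gf_le hl)
    rw [← ENNReal.ofReal_one]
    exact ENNReal.ofReal_le_ofReal (one_le_tl_mul_rhol hl)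
  have h4 : θ ^ k * ν (badSet k) ≤ θ ^ k * ENNReal.ofReal (rhol l) ^ k := by
    calc θ ^ k * ν (badSet k) ≤ (ENNReal.ofReal (t * rhol l)) ^ k :=
          (h1.trans h2).trans (pow_le_pow_left' h3 k)
      _ = θ ^ k * ENNReal.ofReal (rhol l) ^ k := by
          rw [ENNReal.ofReal_mul ht0.le, mul_pow]
  have hθ0 : θ ^ k ≠ 0 := by
    apply pow_ne_zero
    rw [hθ]
    simp only [ne_eq, ENNReal.ofReal_eq_zero, not_le]
    exact ht0
  have hθtop : θ ^ k ≠ ∞ := by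
    apply ENNReal.pow_ne_top
    rw [hθ]
    exact ENNReal.ofReal_ne_top
  have h5 := (ENNReal.mul_le_mul_iff_right hθ0 hθtop).1 h4
  calc ν (badSet k) ≤ ENNReal.ofReal (rhol l) ^ k := h5
    _ = ENNReal.ofReal (rhol l ^ k) := (ENNReal.ofReal_pow (rhol_pos hl).le k).symm

/-! ### The witness condition -/

/-- The witness condition at node `i`: node `i` exists and either lies on an even level
with exactly one child, or on an `F`-level with exactly two children. -/
def Cw (F : Set ℕ) (ω : ℕ → ℕ) (i : ℕ) : Prop :=
  treeAtLeast ω (i + 1) ∧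
    ((Even (level ω i) ∧ ω i = 1) ∨ (level ω i ∈ F ∧ ω i = 2))

lemma Cw_congr (F : Set ℕ) {ω ω' : ℕ → ℕ} {i : ℕ} (h : ∀ j ≤ i, ω j = ω' j) :
    Cw F ω i ↔ Cw F ω' i := by
  have h' : ∀ j < i, ω j = ω' j := fun j hj => h j hj.le
  have hT := treeAtLeast_congr (ω := ω) (ω' := ω') h'
  have hωi : ω i = ω' i := h i le_rfl
  constructor
  · rintro ⟨h1, h2⟩
    have hlv : level ω i = level ω' i := level_congr i h' h1
    exact ⟨hT.1 h1, by rwa [hlv, hωi] at h2⟩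
  · rintro ⟨h1, h2⟩
    have hlv : level ω i = level ω' i := level_congr i h' (hT.2 h1)
    exact ⟨hT.2 h1, by rwa [← hlv, ← hωi] at h2⟩

end RapidAux

/-- Let `F ⊆ ℕ` be an arbitrary set of levels, `A` the event that some node on an even
level has exactly one child, and `B` the event that some node on an `F`-level has exactly
two children.  Then `A ∪ B` is rapidly determined over `(λ₀, λ₁)` for every
`0 ≤ λ₀ < λ₁ ≤ ∞`. -/
theorem even_or_Flevel_rapidly_determined
    (P : ℝ → Measure (ℕ → ℕ)) (hP : IsPoissonSeedFamily P)
    (F : Set ℕ)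
    (A B : Set (ℕ → ℕ))
    (hAdef : A = {ω | ∃ i : ℕ, treeAtLeast ω (i + 1) ∧ Even (level ω i) ∧ ω i = 1})
    (hBdef : B = {ω | ∃ i : ℕ, treeAtLeast ω (i + 1) ∧ level ω i ∈ F ∧ ω i = 2})
    (lam0 lam1 : EReal) (h0 : 0 ≤ lam0) (h01 : lam0 < lam1) :
    ∀ lam : ℝ, lam0 < (lam : EReal) → (lam : EReal) < lam1 →
      ∃ C > (0 : ℝ), ∃ c > (0 : ℝ), ∃ k₀ : ℕ, ∃ Ak : ℕ → Set (ℕ → ℕ),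
        ∀ k ≥ k₀, TautDetermined k (Ak k) ∧
          P lam (symmDiff (A ∪ B) (Ak k)) ≤ ENNReal.ofReal (C * Real.exp (-c * k)) := by
  classical
  intro lam hl0 hl1
  have hlam : 0 < lam := by
    have h' : ((0:ℝ) : EReal) < (lam : EReal) := lt_of_le_of_lt (by exact_mod_cast h0) hl0
    exact_mod_cast h'
  obtain ⟨hprob, hmap⟩ := hP lam hlam
  have hAB : A ∪ B = {ω | ∃ i, RapidAux.Cw F ω i} := by
    rw [hAdef, hBdef]
    ext ω
    simp only [Set.mem_union, Set.mem_setOf_eq, RapidAux.Cw]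
    constructor
    · rintro (⟨i, h1, h2, h3⟩ | ⟨i, h1, h2, h3⟩)
      · exact ⟨i, h1, Or.inl ⟨h2, h3⟩⟩
      · exact ⟨i, h1, Or.inr ⟨h2, h3⟩⟩
    · rintro ⟨i, h1, h2 | h2⟩
      · exact Or.inl ⟨i, h1, h2.1, h2.2⟩
      · exact Or.inr ⟨i, h1, h2.1, h2.2⟩
  have hrpos := RapidAux.rhol_pos hlam
  have hrlt := RapidAux.rhol_lt_one hlam
  refine ⟨1, one_pos, -Real.log (RapidAux.rhol lam), ?_, 0,
    fun k => {ω | ∃ i < k, RapidAux.Cw F ω i}, ?_⟩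
  · have := Real.log_neg hrpos hrlt
    linarith
  intro k _
  constructor
  · refine ⟨{y : Fin k → ℕ | ∃ i < k, RapidAux.Cw F (RapidAux.ext k y) i}, ?_⟩
    ext ω
    simp only [Set.mem_setOf_eq]
    have hiff : ∀ i < k, (RapidAux.Cw F ω i ↔
        RapidAux.Cw F (RapidAux.ext k (restrictSeed k ω)) i) := by
      intro i hik
      refine RapidAux.Cw_congr F fun j hj => ?_
      exact (RapidAux.ext_agree k ω j (lt_of_le_of_lt hj hik)).symm
    constructor
    · rintro ⟨i, hik, hC⟩; exact ⟨i, hik, (hiff i hik).1 hC⟩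
    · rintro ⟨i, hik, hC⟩; exact ⟨i, hik, (hiff i hik).2 hC⟩
  · -- the measure bound
    set Akk : Set (ℕ → ℕ) := {ω | ∃ i < k, RapidAux.Cw F ω i} with hAkk
    have hAksub : Akk ⊆ A ∪ B := by
      rw [hAB]
      rintro ω ⟨i, _, hC⟩
      exact ⟨i, hC⟩
    have hsymmeq : symmDiff (A ∪ B) Akk = (A ∪ B) \ Akk := symmDiff_of_ge hAksub
    have hsub : (A ∪ B) \ Akk ⊆ restrictSeed k ⁻¹' RapidAux.badSet k := by
      rintro ω ⟨hmem, hnot⟩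
      rw [hAB] at hmem
      obtain ⟨i0, hC⟩ := hmem
      have hnotlt : ∀ i < k, ¬ RapidAux.Cw F ω i := by
        intro i hik hCi
        exact hnot ⟨i, hik, hCi⟩
      have hi0k : k ≤ i0 := by
        by_contra hcon
        exact hnotlt i0 (by omega) hC
      have hTk : treeAtLeast ω (k + 1) := RapidAux.treeAtLeast_mono hC.1 (by omega)
      refine ⟨?_, ?_⟩
      · exact (RapidAux.treeAtLeast_congr (RapidAux.ext_agree k ω)).2 hTk
      · intro i hcond hx1
        have hcond' : RapidAux.condEA i.1 (fun j : Fin i.1 => ω j.1) := hcond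
        rw [RapidAux.condEA_iff] at hcond'
        exact hnotlt i.1 i.2 ⟨hcond'.1, Or.inl ⟨hcond'.2, hx1⟩⟩
    have hmeasRes : Measurable (restrictSeed k) :=
      measurable_pi_lambda _ fun j => measurable_pi_apply _
    have hBadMeas : MeasurableSet (RapidAux.badSet k) := (Set.to_countable _).measurableSet
    have hmapk : (P lam).map (restrictSeed k)
        = Measure.pi (fun _ : Fin k => poissonMeasure lam.toNNReal) := hmap k
    calc P lam (symmDiff (A ∪ B) Akk)
        ≤ P lam (restrictSeed k ⁻¹' RapidAux.badSet k) := by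
          rw [hsymmeq]; exact measure_mono hsub
      _ = (P lam).map (restrictSeed k) (RapidAux.badSet k) :=
          (Measure.map_apply hmeasRes hBadMeas).symm
      _ = Measure.pi (fun _ : Fin k => poissonMeasure lam.toNNReal) (RapidAux.badSet k) := by
          rw [hmapk]
      _ ≤ ENNReal.ofReal (RapidAux.rhol lam ^ k) := RapidAux.pi_bad_le lam hlam k
      _ = ENNReal.ofReal (1 * Real.exp (-(-Real.log (RapidAux.rhol lam)) * k)) := by
          congr 1
          rw [one_mul, neg_neg, mul_comm (Real.log (RapidAux.rhol lam)) (k:ℝ),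
            Real.exp_nat_mul, Real.exp_log hrpos]
end

section
/- Let F ⊆ ℕ be an arbitrary set of levels. Let A = {ω ∈ ℕ^ℕ : there exists i ≥ 1 such that the tree encoded by ω has at least i vertices, node i lies on an even level, and ω_i = 1}, and let B = {ω ∈ ℕ^ℕ : there exists i ≥ 1 such that the tree encoded by ω has at least i vertices, the level of node i belongs to F, and ω_i = 2}. Then the function λ ↦ P_λ(A ∪ B) is real analytic on (0, ∞); in particular (taking F = ∅), λ ↦ P_λ(A) is real analytic on (0, ∞). -/
open MeasureTheory ProbabilityTheory Filter Topology

namespace GW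
open Finset Real Nat
open scoped ENNReal NNReal Classical

lemma treeAtLeast_mono {ω : ℕ → ℕ} {k m : ℕ} (h : k ≤ m) (hm : treeAtLeast ω m) :
    treeAtLeast ω k :=
  fun j h1 h2 => hm j h1 (h2.trans (Nat.sub_le_sub_right h 1))

lemma level_zero (ω : ℕ → ℕ) : level ω 0 = 0 := by
  rw [level]; simp

lemma level_succ {ω : ℕ → ℕ} {i : ℕ} (h : parent ω i < i) :
    level ω i = level ω (parent ω i) + 1 := by
  rw [level]; simp [h]

lemma parent_eq {ω : ℕ → ℕ} {i j : ℕ} (h1 : ∑ t ∈ Finset.range j, ω t < i)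
    (h2 : i ≤ ∑ t ∈ Finset.range (j + 1), ω t) : parent ω i = j := by
  unfold parent
  refine le_antisymm (Nat.sInf_le h2) (le_csInf ⟨j, h2⟩ ?_)
  intro p hp
  by_contra hlt
  push_neg at hlt
  have hsub : ∑ t ∈ Finset.range (p + 1), ω t ≤ ∑ t ∈ Finset.range j, ω t :=
    Finset.sum_le_sum_of_subset (Finset.range_subset_range.2 hlt)
  exact absurd (le_trans hp hsub) (not_le.2 h1)

lemma parent_spec {ω : ℕ → ℕ} {i : ℕ} (hi : 1 ≤ i) (hsum : i ≤ ∑ t ∈ Finset.range i, ω t) :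
    (∑ t ∈ Finset.range (parent ω i), ω t < i) ∧
      (i ≤ ∑ t ∈ Finset.range (parent ω i + 1), ω t) ∧ parent ω i < i := by
  have hne : {p : ℕ | i ≤ ∑ t ∈ Finset.range (p + 1), ω t}.Nonempty := by
    refine ⟨i - 1, ?_⟩
    simpa [Nat.sub_add_cancel hi] using hsum
  have hmem := Nat.sInf_mem hne
  have hle : parent ω i ≤ i - 1 := Nat.sInf_le (by simpa [Nat.sub_add_cancel hi] using hsum)
  have hlt : parent ω i < i := lt_of_le_of_lt hle (Nat.sub_lt_of_pos_le one_pos hi)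
  refine ⟨?_, hmem, hlt⟩
  rcases Nat.eq_zero_or_pos (parent ω i) with h0 | hpos
  · simp [h0]; omega
  · have : parent ω i - 1 ∉ {p : ℕ | i ≤ ∑ t ∈ Finset.range (p + 1), ω t} :=
      Nat.notMem_of_lt_sInf (Nat.sub_lt hpos one_pos)
    simp only [Set.mem_setOf_eq, not_le] at this
    simpa [Nat.sub_add_cancel hpos] using this

lemma treeAtLeast_sum {ω : ℕ → ℕ} {i : ℕ} (hi : 1 ≤ i) (h : treeAtLeast ω (i + 1)) :
    i ≤ ∑ t ∈ Finset.range i, ω t := h i hi (by simp)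

/-- levels are determined by earlier coordinates, on live nodes -/
lemma level_congr : ∀ i : ℕ, ∀ ω ω' : ℕ → ℕ, (∀ t < i, ω t = ω' t) →
    treeAtLeast ω (i + 1) → treeAtLeast ω' (i + 1) → level ω i = level ω' i := by
  intro i
  induction i using Nat.strong_induction_on with
  | _ i IH =>
    intro ω ω' hagree hω hω'
    rcases Nat.eq_zero_or_pos i with rfl | hi
    · simp [level_zero]
    · have hsum := treeAtLeast_sum hi hω
      have hsum' : i ≤ ∑ t ∈ Finset.range i, ω' t := by
        rw [← Finset.sum_congr rfl fun t ht => hagree t (Finset.mem_range.1 ht)]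
        exact hsum
      obtain ⟨h1, h2, h3⟩ := parent_spec hi hsum
      set p := parent ω i with hp
      have hpe : parent ω' i = p := by
        refine parent_eq ?_ ?_
        · rw [← Finset.sum_congr rfl fun t ht => hagree t ((Finset.mem_range.1 ht).trans h3)]
          exact h1
        · rw [← Finset.sum_congr rfl fun t ht =>
            hagree t (lt_of_lt_of_le (Finset.mem_range.1 ht) h3)]
          exact h2
      have h3' : parent ω' i < i := hpe ▸ h3
      rw [level_succ h3, level_succ h3', hpe]
      have := IH p h3 ω ω' (fun t ht => hagree t (ht.trans h3))
        (treeAtLeast_mono (by omega) hω) (treeAtLeast_mono (by omega) hω')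
      rw [this]

/-- count of odd-level nodes is at most the sum of children of even-level nodes -/
lemma card_odd_le {ω : ℕ → ℕ} {n : ℕ} (hA : treeAtLeast ω n) :
    ((Finset.range n).filter (fun t => ¬ Even (level ω t))).card
      ≤ ∑ j ∈ (Finset.range n).filter (fun j => Even (level ω j)), ω j := by
  classical
  have hsub : ((Finset.range n).filter (fun t => ¬ Even (level ω t))) ⊆
      ((Finset.range n).filter (fun j => Even (level ω j))).biUnion
        (fun j => Finset.Ioc (∑ t ∈ Finset.range j, ω t) ((∑ t ∈ Finset.range j, ω t) + ω j)) := by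
    intro t ht
    rw [Finset.mem_filter, Finset.mem_range] at ht
    obtain ⟨htn, hodd⟩ := ht
    have ht1 : 1 ≤ t := by
      rcases Nat.eq_zero_or_pos t with rfl | h
      · exact absurd (by simp [level_zero]) hodd
      · exact h
    have hsum : t ≤ ∑ s ∈ Finset.range t, ω s := hA t ht1 (by omega)
    obtain ⟨h1, h2, h3⟩ := parent_spec ht1 hsum
    rw [Finset.mem_biUnion]
    refine ⟨parent ω t, ?_, ?_⟩
    · rw [Finset.mem_filter, Finset.mem_range]
      refine ⟨by omega, ?_⟩
      have := level_succ h3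
      rw [this] at hodd
      rcases Nat.even_or_odd (level ω (parent ω t)) with h | h
      · exact h
      · exact absurd h.add_one hodd
    · rw [Finset.mem_Ioc]
      constructor
      · exact h1
      · have := h2
        rwa [Finset.sum_range_succ] at this
  calc ((Finset.range n).filter (fun t => ¬ Even (level ω t))).card
      ≤ _ := Finset.card_le_card hsub
    _ ≤ ∑ j ∈ (Finset.range n).filter (fun j => Even (level ω j)),
          (Finset.Ioc (∑ t ∈ Finset.range j, ω t) ((∑ t ∈ Finset.range j, ω t) + ω j)).card :=
        Finset.card_biUnion_le
    _ = ∑ j ∈ (Finset.range n).filter (fun j => Even (level ω j)), ω j := by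
        refine Finset.sum_congr rfl fun j _ => ?_
        rw [Nat.card_Ioc]
        omega

noncomputable def wgt (y : ℝ≥0∞) (ω : ℕ → ℕ) (n : ℕ) : ℝ≥0∞ :=
  ∏ t ∈ Finset.range n, (if Even (level ω t) then y ^ ω t else y⁻¹)

lemma one_le_wgt {y : ℝ≥0∞} (hy : 1 ≤ y) (hytop : y ≠ ⊤) {ω : ℕ → ℕ} {n : ℕ}
    (hA : treeAtLeast ω n) : 1 ≤ wgt y ω n := by
  classical
  unfold wgt
  rw [Finset.prod_ite, Finset.prod_const, Finset.prod_pow_eq_pow_sum]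
  set A := ∑ t ∈ (Finset.range n).filter (fun j => Even (level ω j)), ω t with hAdef
  set B := ((Finset.range n).filter (fun t => ¬ Even (level ω t))).card with hBdef
  have hBA : B ≤ A := card_odd_le hA
  have hy0 : y ≠ 0 := by
    intro h; rw [h] at hy; exact absurd hy (by simp)
  have hinv : (y⁻¹) ^ B = (y ^ B)⁻¹ := (ENNReal.inv_pow).symm ▸ rfl
  rw [hinv]
  have hcancel : y ^ B * (y ^ B)⁻¹ = 1 :=
    ENNReal.mul_inv_cancel (pow_ne_zero _ hy0) (ENNReal.pow_ne_top hytop)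
  calc (1 : ℝ≥0∞) = y ^ B * (y ^ B)⁻¹ := hcancel.symm
    _ ≤ y ^ A * (y ^ B)⁻¹ := mul_le_mul_left (pow_le_pow_right₀ hy hBA) _

def pad (n : ℕ) (p : Fin n → ℕ) : ℕ → ℕ := fun t => if h : t < n then p ⟨t, h⟩ else 0

lemma pad_snoc (n : ℕ) (s : Fin n → ℕ) (d : ℕ) (t : ℕ) :
    pad (n + 1) (Fin.snoc s d) t = if t = n then d else pad n s t := by
  unfold pad
  rcases lt_trichotomy t n with h | rfl | h
  · rw [dif_pos (by omega), if_neg (by omega), dif_pos h]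
    simp [Fin.snoc, h]
  · rw [dif_pos (by omega), if_pos rfl]
    simp [Fin.snoc]
  · rw [dif_neg (by omega), if_neg (by omega), dif_neg (by omega)]

lemma pad_snoc_lt {n t : ℕ} (s : Fin n → ℕ) (d : ℕ) (h : t < n) :
    pad (n + 1) (Fin.snoc s d) t = pad n s t := by
  rw [pad_snoc, if_neg (by omega)]

lemma sum_pad_snoc {n : ℕ} (s : Fin n → ℕ) (d : ℕ) {j : ℕ} (hj : j ≤ n) :
    ∑ t ∈ Finset.range j, pad (n + 1) (Fin.snoc s d) t = ∑ t ∈ Finset.range j, pad n s t :=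
  Finset.sum_congr rfl fun t ht => pad_snoc_lt s d (by have := Finset.mem_range.1 ht; omega)

lemma tA_snoc_iff {n : ℕ} (s : Fin n → ℕ) (d : ℕ) :
    treeAtLeast (pad (n + 1) (Fin.snoc s d)) (n + 1) ↔
      treeAtLeast (pad n s) n ∧ n ≤ ∑ t ∈ Finset.range n, pad n s t := by
  constructor
  · intro h
    refine ⟨fun j h1 h2 => ?_, ?_⟩
    · have := h j h1 (by omega)
      rwa [sum_pad_snoc s d (by omega)] at this
    · rcases Nat.eq_zero_or_pos n with rfl | hn
      · simp
      · have := h n hn (by omega)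
        rwa [sum_pad_snoc s d le_rfl] at this
  · rintro ⟨h1, h2⟩ j hj1 hj2
    rw [sum_pad_snoc s d (by omega)]
    rcases Nat.lt_or_ge j n with h | h
    · exact h1 j hj1 (by omega)
    · have : j = n := by omega
      subst this; exact h2

/-- the level of the would-be node `n`, as determined by the first `n` coordinates -/
noncomputable def lastLev (n : ℕ) (s : Fin n → ℕ) : ℕ := level (pad (n + 1) (Fin.snoc s 0)) n

lemma level_snoc_eq {n : ℕ} (s : Fin n → ℕ) (d : ℕ)
    (h : treeAtLeast (pad (n + 1) (Fin.snoc s d)) (n + 1)) {t : ℕ} (ht : t < n) :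
    level (pad (n + 1) (Fin.snoc s d)) t = level (pad n s) t := by
  refine level_congr t _ _ (fun u hu => pad_snoc_lt s d (by omega)) ?_ ?_
  · exact treeAtLeast_mono (by omega) h
  · exact treeAtLeast_mono (by omega) ((tA_snoc_iff s d).1 h).1

lemma level_snoc_last {n : ℕ} (s : Fin n → ℕ) (d : ℕ)
    (h : treeAtLeast (pad (n + 1) (Fin.snoc s d)) (n + 1)) :
    level (pad (n + 1) (Fin.snoc s d)) n = lastLev n s := by
  refine level_congr n _ _ (fun u hu => ?_) h ?_
  · rw [pad_snoc, pad_snoc, if_neg (by omega), if_neg (by omega)]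
  · rw [tA_snoc_iff] at h ⊢
    exact h

noncomputable def FF (f : ℕ → ℝ≥0∞) (n : ℕ) (p : Fin n → ℕ) : ℝ≥0∞ :=
  ∏ t ∈ Finset.range n, f (pad n p t)

def ok (n : ℕ) (p : Fin n → ℕ) : Prop :=
  treeAtLeast (pad n p) n ∧ ∀ t < n, Even (level (pad n p) t) → pad n p t ≠ 1

noncomputable def MM (f : ℕ → ℝ≥0∞) (y : ℝ≥0∞) (n : ℕ) : ℝ≥0∞ :=
  ∑' p : Fin n → ℕ, if ok n p then FF f n p * wgt y (pad n p) n else 0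

lemma ok_snoc_iff {n : ℕ} (s : Fin n → ℕ) (d : ℕ) :
    ok (n + 1) (Fin.snoc s d) ↔
      ok n s ∧ n ≤ ∑ t ∈ Finset.range n, pad n s t ∧ (Even (lastLev n s) → d ≠ 1) := by
  constructor
  · rintro ⟨htA, hadm⟩
    obtain ⟨h1, h2⟩ := (tA_snoc_iff s d).1 htA
    refine ⟨⟨h1, fun t ht hev => ?_⟩, h2, fun hev => ?_⟩
    · have := hadm t (by omega)
      rw [level_snoc_eq s d htA ht, pad_snoc_lt s d ht] at this
      exact this hev
    · have := hadm n (by omega)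
      rw [level_snoc_last s d htA, pad_snoc, if_pos rfl] at this
      exact this hev
  · rintro ⟨⟨h1, hadm⟩, h2, h3⟩
    have htA : treeAtLeast (pad (n + 1) (Fin.snoc s d)) (n + 1) := (tA_snoc_iff s d).2 ⟨h1, h2⟩
    refine ⟨htA, fun t ht hev => ?_⟩
    rcases Nat.lt_or_ge t n with h | h
    · rw [level_snoc_eq s d htA h] at hev
      rw [pad_snoc_lt s d h]
      exact hadm t h hev
    · have : t = n := by omega
      subst this
      rw [level_snoc_last s d htA] at hev
      rw [pad_snoc, if_pos rfl]
      exact h3 hev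

lemma MM_le (f : ℕ → ℝ≥0∞) {y : ℝ≥0∞} (hy : 1 ≤ y) (hytop : y ≠ ⊤) {ce co : ℝ≥0∞}
    (hce : (∑' d : ℕ, if d = 1 then 0 else f d * y ^ d) ≤ ce)
    (hco : (∑' d : ℕ, f d) ≤ y * co) :
    ∀ n, MM f y n ≤ max ce co ^ n := by
  classical
  have hy0 : y ≠ 0 := by intro h; rw [h] at hy; exact absurd hy (by simp)
  intro n
  induction n with
  | zero =>
    have h1 : ∀ p : Fin 0 → ℕ, (if ok 0 p then FF f 0 p * wgt y (pad 0 p) 0 else 0) = 1 := by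
      intro p
      rw [if_pos ⟨fun j hj1 hj2 => by omega, fun t ht => by omega⟩]
      simp [FF, wgt]
    rw [MM, pow_zero, tsum_congr h1]
    exact le_of_eq (tsum_eq_single default fun b hb => absurd (Subsingleton.elim b default) hb)
  | succ n IH =>
    have key : ∀ s : Fin n → ℕ, (∑' d : ℕ,
        (if ok (n + 1) (Fin.snoc s d) then
          FF f (n + 1) (Fin.snoc s d) * wgt y (pad (n + 1) (Fin.snoc s d)) (n + 1) else 0))
        ≤ (if ok n s then FF f n s * wgt y (pad n s) n else 0) * max ce co := by
      intro s
      by_cases hok : ok n s ∧ n ≤ ∑ t ∈ Finset.range n, pad n s t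
      · obtain ⟨hoks, hc⟩ := hok
        have htA : ∀ d : ℕ, treeAtLeast (pad (n + 1) (Fin.snoc s d)) (n + 1) :=
          fun d => (tA_snoc_iff s d).2 ⟨hoks.1, hc⟩
        have hterm : ∀ d : ℕ, (if ok (n + 1) (Fin.snoc s d) then
            FF f (n + 1) (Fin.snoc s d) * wgt y (pad (n + 1) (Fin.snoc s d)) (n + 1) else 0)
            = (FF f n s * wgt y (pad n s) n) *
              (if Even (lastLev n s) then (if d = 1 then 0 else f d * y ^ d) else f d * y⁻¹) := by
          intro d
          have hFF : FF f (n + 1) (Fin.snoc s d) = FF f n s * f d := by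
            rw [FF, Finset.prod_range_succ, pad_snoc, if_pos rfl]
            congr 1
            exact Finset.prod_congr rfl fun t ht => by
              rw [pad_snoc_lt s d (Finset.mem_range.1 ht)]
          have hwgt : wgt y (pad (n + 1) (Fin.snoc s d)) (n + 1)
              = wgt y (pad n s) n * (if Even (lastLev n s) then y ^ d else y⁻¹) := by
            rw [wgt, Finset.prod_range_succ]
            congr 1
            · exact Finset.prod_congr rfl fun t ht => by
                rw [level_snoc_eq s d (htA d) (Finset.mem_range.1 ht),
                  pad_snoc_lt s d (Finset.mem_range.1 ht)]
            · rw [level_snoc_last s d (htA d), pad_snoc, if_pos rfl]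
          by_cases hlast : Even (lastLev n s)
          · by_cases hd : d = 1
            · rw [if_neg (fun h => ((ok_snoc_iff s d).1 h).2.2 hlast hd),
                if_pos hlast, if_pos hd, mul_zero]
            · rw [if_pos ((ok_snoc_iff s d).2 ⟨hoks, hc, fun _ => hd⟩), hFF, hwgt,
                if_pos hlast, if_pos hlast, if_neg hd]
              ring
          · rw [if_pos ((ok_snoc_iff s d).2 ⟨hoks, hc, fun h => absurd h hlast⟩), hFF, hwgt,
              if_neg hlast, if_neg hlast]
            ring
        rw [tsum_congr hterm, ENNReal.tsum_mul_left, if_pos hoks]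
        refine mul_le_mul_right ?_ _
        by_cases hlast : Even (lastLev n s)
        · simp only [if_pos hlast]
          exact le_trans hce (le_max_left _ _)
        · simp only [if_neg hlast]
          rw [ENNReal.tsum_mul_right]
          calc (∑' d : ℕ, f d) * y⁻¹ ≤ (y * co) * y⁻¹ := mul_le_mul_left hco _
            _ = co * (y * y⁻¹) := by ring
            _ = co := by rw [ENNReal.mul_inv_cancel hy0 hytop, mul_one]
            _ ≤ max ce co := le_max_right _ _
      · have hterm : ∀ d : ℕ, (if ok (n + 1) (Fin.snoc s d) then
            FF f (n + 1) (Fin.snoc s d) * wgt y (pad (n + 1) (Fin.snoc s d)) (n + 1) else 0) = 0 := by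
          intro d
          rw [if_neg]
          intro h
          obtain ⟨h1, h2, _⟩ := (ok_snoc_iff s d).1 h
          exact hok ⟨h1, h2⟩
        rw [tsum_congr hterm]
        simp
    calc MM f y (n + 1)
        = ∑' x : ℕ × (Fin n → ℕ), (if ok (n + 1) (Fin.snoc x.2 x.1) then
            FF f (n + 1) (Fin.snoc x.2 x.1) * wgt y (pad (n + 1) (Fin.snoc x.2 x.1)) (n + 1)
          else 0) := ((Fin.snocEquiv (fun _ : Fin (n + 1) => ℕ)).tsum_eq _).symm
      _ = ∑' d : ℕ, ∑' s : Fin n → ℕ, (if ok (n + 1) (Fin.snoc s d) then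
            FF f (n + 1) (Fin.snoc s d) * wgt y (pad (n + 1) (Fin.snoc s d)) (n + 1)
          else 0) := ENNReal.tsum_prod (f := fun d s => if ok (n + 1) (Fin.snoc s d) then
            FF f (n + 1) (Fin.snoc s d) * wgt y (pad (n + 1) (Fin.snoc s d)) (n + 1) else 0)
      _ = ∑' s : Fin n → ℕ, ∑' d : ℕ, (if ok (n + 1) (Fin.snoc s d) then
            FF f (n + 1) (Fin.snoc s d) * wgt y (pad (n + 1) (Fin.snoc s d)) (n + 1)
          else 0) := ENNReal.tsum_comm
      _ ≤ ∑' s : Fin n → ℕ, (if ok n s then FF f n s * wgt y (pad n s) n else 0) * max ce co :=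
          ENNReal.tsum_le_tsum key
      _ = MM f y n * max ce co := by rw [MM]; exact ENNReal.tsum_mul_right
      _ ≤ max ce co ^ n * max ce co := mul_le_mul_left IH _
      _ = max ce co ^ (n + 1) := (pow_succ _ _).symm

/-- main combinatorial bound -/
lemma tsum_indicator_le (f : ℕ → ℝ≥0∞) {y : ℝ≥0∞} (hy : 1 ≤ y) (hytop : y ≠ ⊤) {ce co : ℝ≥0∞}
    (hce : (∑' d : ℕ, if d = 1 then 0 else f d * y ^ d) ≤ ce)
    (hco : (∑' d : ℕ, f d) ≤ y * co) (n : ℕ) (S : Set (Fin n → ℕ)) (hS : ∀ p ∈ S, ok n p) :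
    (∑' p : Fin n → ℕ, if p ∈ S then FF f n p else 0) ≤ max ce co ^ n := by
  classical
  refine le_trans (ENNReal.tsum_le_tsum fun p => ?_) (MM_le f hy hytop hce hco n)
  by_cases hp : p ∈ S
  · rw [if_pos hp, if_pos (hS p hp)]
    calc FF f n p = FF f n p * 1 := (mul_one _).symm
      _ ≤ FF f n p * wgt y (pad n p) n :=
          mul_le_mul_right (one_le_wgt hy hytop (hS p hp).1) _
  · rw [if_neg hp]
    exact _root_.zero_le

noncomputable def rho : ℝ := max (Real.exp (5/4) - 5/4) (4/5 * Real.exp 1)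

lemma rho_pos : 0 < rho := lt_max_of_lt_right (by positivity)

lemma real_exp_tsum (x : ℝ) : Real.exp x = ∑' d : ℕ, x ^ d / (d ! : ℝ) := by
  rw [Real.exp_eq_exp_ℝ, NormedSpace.exp_eq_tsum_div]

lemma tsum_ofReal_exp {x : ℝ} (hx : 0 ≤ x) :
    (∑' d : ℕ, ENNReal.ofReal (x ^ d / (d ! : ℝ))) = ENNReal.ofReal (Real.exp x) := by
  rw [real_exp_tsum x, ENNReal.ofReal_tsum_of_nonneg (fun d => by positivity)
    (Real.summable_pow_div_factorial x)]

lemma tsum_ite_general {g : ℕ → ℝ} (hg : ∀ d, 0 ≤ g d) (hsum : Summable g) :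
    (∑' d : ℕ, if d = 1 then 0 else ENNReal.ofReal (g d))
      = ENNReal.ofReal ((∑' d, g d) - g 1) := by
  have h : (∑' x : ℕ, ENNReal.ofReal (g x))
      = ENNReal.ofReal (g 1) + ∑' d : ℕ, (if d = 1 then 0 else ENNReal.ofReal (g d)) := by
    rw [ENNReal.tsum_eq_add_tsum_ite (f := fun d => ENNReal.ofReal (g d)) 1]
    congr 1
    apply tsum_congr
    intro d
    by_cases hd : d = 1 <;> simp [hd]
  have hsum' : (∑' d : ℕ, ENNReal.ofReal (g d)) = ENNReal.ofReal (∑' d, g d) :=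
    (ENNReal.ofReal_tsum_of_nonneg hg hsum).symm
  have hle : g 1 ≤ ∑' d, g d := Summable.le_tsum hsum 1 fun d _ => hg d
  have hsplit : ENNReal.ofReal (∑' d, g d)
      = ENNReal.ofReal (g 1) + ENNReal.ofReal ((∑' d, g d) - g 1) := by
    rw [← ENNReal.ofReal_add (hg 1) (by linarith)]
    ring_nf
  rw [hsum', hsplit] at h
  exact ((ENNReal.add_right_inj ENNReal.ofReal_ne_top).1 h).symm

lemma hce_fac :
    (∑' d : ℕ, if d = 1 then 0 else ENNReal.ofReal (1 / (d ! : ℝ)) * ENNReal.ofReal ((5:ℝ)/4) ^ d)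
      ≤ ENNReal.ofReal rho := by
  have hterm : ∀ d : ℕ, ENNReal.ofReal (1 / (d ! : ℝ)) * ENNReal.ofReal ((5:ℝ)/4) ^ d
      = ENNReal.ofReal (((5:ℝ)/4) ^ d / (d ! : ℝ)) := by
    intro d
    rw [← ENNReal.ofReal_pow (by norm_num), ← ENNReal.ofReal_mul (by positivity)]
    congr 1; ring
  have h2 : (∑' d : ℕ, if d = 1 then 0 else ENNReal.ofReal (((5:ℝ)/4) ^ d / (d ! : ℝ)))
      = ENNReal.ofReal (Real.exp (5/4) - 5/4) := by
    rw [tsum_ite_general (fun d => by positivity) (Real.summable_pow_div_factorial _)]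
    congr 1
    rw [← real_exp_tsum]
    norm_num
  calc (∑' d : ℕ, if d = 1 then 0 else ENNReal.ofReal (1 / (d ! : ℝ)) * ENNReal.ofReal ((5:ℝ)/4) ^ d)
      = ∑' d : ℕ, if d = 1 then 0 else ENNReal.ofReal (((5:ℝ)/4) ^ d / (d ! : ℝ)) :=
        tsum_congr fun d => by rw [hterm]
    _ = ENNReal.ofReal (Real.exp (5/4) - 5/4) := h2
    _ ≤ ENNReal.ofReal rho := ENNReal.ofReal_le_ofReal (le_max_left _ _)

lemma hco_fac :
    (∑' d : ℕ, ENNReal.ofReal (1 / (d ! : ℝ)))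
      ≤ ENNReal.ofReal ((5:ℝ)/4) * ENNReal.ofReal (4/5 * Real.exp 1) := by
  have h1 : (∑' d : ℕ, ENNReal.ofReal (1 / (d ! : ℝ))) = ENNReal.ofReal (Real.exp 1) := by
    rw [← tsum_ofReal_exp (le_of_lt one_pos)]
    exact tsum_congr fun d => by norm_num
  rw [h1, ← ENNReal.ofReal_mul (by norm_num)]
  apply ENNReal.ofReal_le_ofReal
  rw [show (5:ℝ)/4 * (4/5 * Real.exp 1) = Real.exp 1 by ring]

lemma rho_lt : rho < Real.exp (9/10) := by
  have e1 : Real.exp 1 < 2.7182818286 := Real.exp_one_lt_d9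
  have e1p : 0 < Real.exp 1 := Real.exp_pos 1
  have equarter : Real.exp (1/4) ≤ 4/3 := by
    have := Real.exp_bound_div_one_sub_of_interval (x := 1/4) (by norm_num) (by norm_num)
    calc Real.exp (1/4) ≤ 1 / (1 - 1/4) := this
      _ = 4/3 := by norm_num
  have e54 : Real.exp (5/4) ≤ 2.7182818286 * (4/3) := by
    have : Real.exp (5/4) = Real.exp 1 * Real.exp (1/4) := by
      rw [← Real.exp_add]; norm_num
    rw [this]
    exact mul_le_mul (le_of_lt e1) equarter (Real.exp_pos _).le (by norm_num)
  have lower : (2.4538375 : ℝ) ≤ Real.exp (9/10) := by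
    have h := Real.sum_le_exp_of_nonneg (x := (9:ℝ)/10) (by norm_num) 5
    have hsum5 : ∑ i ∈ Finset.range 5, ((9:ℝ)/10) ^ i / (i ! : ℝ) = 2.4538375 := by
      rw [Finset.sum_range_succ, Finset.sum_range_succ, Finset.sum_range_succ,
        Finset.sum_range_succ, Finset.sum_range_succ, Finset.sum_range_zero]
      norm_num [Nat.factorial]
    rw [hsum5] at h
    exact h
  apply max_lt
  · linarith
  · linarith

lemma inv_one_sub_le {u : ℝ} (h0 : 0 ≤ u) (h1 : u ≤ 1/2) : 1 / (1 - u) ≤ 1 + 2 * u := by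
  rw [div_le_iff₀ (by linarith)]
  nlinarith

lemma lam_exp_lt_one {lam : ℝ} (hlam : 0 < lam) : lam * Real.exp (-lam) < 1 := by
  have h := Real.add_one_le_exp lam
  have hep : 0 < Real.exp (-lam) := Real.exp_pos _
  have hlt : lam < Real.exp lam := by linarith
  calc lam * Real.exp (-lam) < Real.exp lam * Real.exp (-lam) :=
        mul_lt_mul_of_pos_right hlt hep
    _ = 1 := by rw [← Real.exp_add]; simp

lemma tsum_pois_eq {lam : ℝ} (c : ℝ) (hc : 0 ≤ c) :
    (∑' d : ℕ, ENNReal.ofReal (Real.exp (-lam) * c ^ d / (d ! : ℝ)))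
      = ENNReal.ofReal (Real.exp (-lam) * Real.exp c) := by
  have hep : (0:ℝ) ≤ Real.exp (-lam) := (Real.exp_pos _).le
  have hsum : Summable (fun d : ℕ => Real.exp (-lam) * c ^ d / (d ! : ℝ)) :=
    ((Real.summable_pow_div_factorial c).mul_left (Real.exp (-lam))).congr fun d => by ring
  rw [← ENNReal.ofReal_tsum_of_nonneg (fun d => by positivity) hsum]
  congr 1
  rw [real_exp_tsum c, ← tsum_mul_left]
  exact tsum_congr fun d => by ring

/-- the Poisson weight system making the infinite part vanish -/
lemma pois_theta {lam : ℝ} (hlam : 0 < lam) :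
    ∃ y ce co : ℝ≥0∞, 1 ≤ y ∧ y ≠ ⊤ ∧
      ((∑' d : ℕ, if d = 1 then 0 else
          ENNReal.ofReal (Real.exp (-lam) * lam ^ d / (d ! : ℝ)) * y ^ d) ≤ ce) ∧
      ((∑' d : ℕ, ENNReal.ofReal (Real.exp (-lam) * lam ^ d / (d ! : ℝ))) ≤ y * co) ∧
      max ce co < 1 := by
  set yr : ℝ := 1 + Real.exp (-lam) / 4 with hyr
  have hep : 0 < Real.exp (-lam) := Real.exp_pos _
  have hyr1 : 1 < yr := by simp only [hyr]; linarith
  have hyr0 : 0 < yr := by linarith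
  have hu1 : lam * Real.exp (-lam) < 1 := lam_exp_lt_one hlam
  have hu0 : 0 < lam * Real.exp (-lam) := by positivity
  refine ⟨ENNReal.ofReal yr, ENNReal.ofReal (1 - lam * Real.exp (-lam) / 2),
    (ENNReal.ofReal yr)⁻¹, ?_, ENNReal.ofReal_ne_top, ?_, ?_, ?_⟩
  · rw [← ENNReal.ofReal_one]
    exact ENNReal.ofReal_le_ofReal (by linarith)
  · have hterm : ∀ d : ℕ, ENNReal.ofReal (Real.exp (-lam) * lam ^ d / (d ! : ℝ))
        * ENNReal.ofReal yr ^ d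
        = ENNReal.ofReal (Real.exp (-lam) * (lam * yr) ^ d / (d ! : ℝ)) := by
      intro d
      rw [← ENNReal.ofReal_pow hyr0.le, ← ENNReal.ofReal_mul (by positivity)]
      congr 1
      rw [mul_pow]; ring
    have hgsum : Summable (fun d : ℕ => Real.exp (-lam) * (lam * yr) ^ d / (d ! : ℝ)) :=
      ((Real.summable_pow_div_factorial (lam * yr)).mul_left (Real.exp (-lam))).congr
        fun d => by ring
    calc (∑' d : ℕ, if d = 1 then 0 else
          ENNReal.ofReal (Real.exp (-lam) * lam ^ d / (d ! : ℝ)) * ENNReal.ofReal yr ^ d)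
        = ∑' d : ℕ, if d = 1 then 0 else
            ENNReal.ofReal (Real.exp (-lam) * (lam * yr) ^ d / (d ! : ℝ)) :=
          tsum_congr fun d => by rw [hterm]
      _ = ENNReal.ofReal ((∑' d : ℕ, Real.exp (-lam) * (lam * yr) ^ d / (d ! : ℝ))
            - Real.exp (-lam) * (lam * yr) ^ 1 / (1 ! : ℝ)) :=
          tsum_ite_general (fun d => by positivity) hgsum
      _ ≤ ENNReal.ofReal (1 - lam * Real.exp (-lam) / 2) := by
          apply ENNReal.ofReal_le_ofReal
          have hval : (∑' d : ℕ, Real.exp (-lam) * (lam * yr) ^ d / (d ! : ℝ))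
              = Real.exp (-lam) * Real.exp (lam * yr) := by
            rw [real_exp_tsum (lam * yr), ← tsum_mul_left]
            exact tsum_congr fun d => by ring
          rw [hval]
          obtain ⟨u, hu⟩ : ∃ u : ℝ, u = lam * Real.exp (-lam) / 4 := ⟨_, rfl⟩
          have huval : Real.exp (-lam) * Real.exp (lam * yr) = Real.exp u := by
            rw [← Real.exp_add]
            congr 1
            rw [hu]; simp only [hyr]; ring
          have hub : u < 1/4 := by rw [hu]; linarith
          have hub0 : 0 ≤ u := by rw [hu]; positivity
          have hexpu : Real.exp u ≤ 1 + 2 * u := by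
            calc Real.exp u ≤ 1 / (1 - u) :=
                  Real.exp_bound_div_one_sub_of_interval hub0 (by linarith)
              _ ≤ 1 + 2 * u := inv_one_sub_le hub0 (by linarith)
          rw [huval]
          have h1f : ((1 ! : ℕ) : ℝ) = 1 := by norm_num
          rw [h1f, pow_one, div_one]
          have hge : lam * Real.exp (-lam) ≤ Real.exp (-lam) * (lam * yr) := by
            have h3 : Real.exp (-lam) * (lam * yr) = lam * Real.exp (-lam) * yr := by ring
            rw [h3]
            nlinarith
          have h2 : Real.exp u ≤ 1 + lam * Real.exp (-lam) / 2 := by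
            rw [hu]
            rw [hu] at hexpu
            linarith
          nlinarith [h2, hge, mul_nonneg (mul_nonneg hlam.le hep.le) hep.le]
  · have h1 : (∑' d : ℕ, ENNReal.ofReal (Real.exp (-lam) * lam ^ d / (d ! : ℝ))) = 1 := by
      rw [tsum_pois_eq lam hlam.le, ← Real.exp_add]
      simp
    rw [h1]
    have : ENNReal.ofReal yr * (ENNReal.ofReal yr)⁻¹ = 1 :=
      ENNReal.mul_inv_cancel (by simp [ENNReal.ofReal_pos, hyr0]) ENNReal.ofReal_ne_top
    rw [this]
  · apply max_lt
    · exact ENNReal.ofReal_lt_one.2 (by linarith)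
    · rw [ENNReal.inv_lt_one, ← ENNReal.ofReal_one]
      exact (ENNReal.ofReal_lt_ofReal_iff hyr0).2 hyr1

noncomputable def fPois (lam : ℝ) : ℕ → ℝ≥0∞ :=
  fun d => ENNReal.ofReal (Real.exp (-lam) * lam ^ d / (d ! : ℝ))

noncomputable def fFac : ℕ → ℝ≥0∞ := fun d => ENNReal.ofReal (1 / (d ! : ℝ))

lemma pad_restrict {n t : ℕ} (ω : ℕ → ℕ) (ht : t < n) :
    pad n (restrictSeed n ω) t = ω t := by
  unfold pad restrictSeed
  rw [dif_pos ht]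

lemma tA_congr {ω ω' : ℕ → ℕ} {k : ℕ} (h : ∀ t < k - 1, ω t = ω' t)
    (hA : treeAtLeast ω k) : treeAtLeast ω' k := by
  intro j hj1 hj2
  rw [← Finset.sum_congr rfl fun t ht => h t (by have := Finset.mem_range.1 ht; omega)]
  exact hA j hj1 hj2

lemma tA_restrict_iff {n : ℕ} (ω : ℕ → ℕ) :
    treeAtLeast (pad n (restrictSeed n ω)) n ↔ treeAtLeast ω n := by
  constructor
  · exact fun h => tA_congr (fun t ht => pad_restrict ω (by omega)) h
  · exact fun h => tA_congr (fun t ht => (pad_restrict ω (by omega)).symm) h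

lemma level_restrict {n t : ℕ} (ω : ℕ → ℕ) (ht : t < n) (hA : treeAtLeast ω (t + 1)) :
    level (pad n (restrictSeed n ω)) t = level ω t := by
  refine level_congr t _ _ (fun u hu => pad_restrict ω (by omega)) ?_ hA
  exact tA_congr (fun u hu => (pad_restrict ω (by omega)).symm) hA

lemma tA_succ_iff (ω : ℕ → ℕ) (n : ℕ) :
    treeAtLeast ω (n + 1) ↔ treeAtLeast ω n ∧ n ≤ ∑ t ∈ Finset.range n, ω t := by
  constructor
  · intro h
    refine ⟨treeAtLeast_mono (by omega) h, ?_⟩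
    rcases Nat.eq_zero_or_pos n with rfl | hn
    · simp
    · exact h n hn (by omega)
  · rintro ⟨h1, h2⟩ j hj1 hj2
    rcases Nat.lt_or_ge j n with h | h
    · exact h1 j hj1 (by omega)
    · have : j = n := by omega
      subst this; exact h2

lemma sum_ge_of_tA {ω : ℕ → ℕ} {n : ℕ} (h : treeAtLeast ω n) :
    n - 1 ≤ ∑ t ∈ Finset.range n, ω t := by
  rcases Nat.lt_or_ge n 2 with hn | hn
  · omega
  · calc n - 1 ≤ ∑ t ∈ Finset.range (n - 1), ω t := h (n - 1) (by omega) (by omega)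
      _ ≤ ∑ t ∈ Finset.range n, ω t :=
        Finset.sum_le_sum_of_subset (Finset.range_subset_range.2 (by omega))

def Sz (n : ℕ) : Set (ℕ → ℕ) := {ω | treeAtLeast ω n ∧ ¬ treeAtLeast ω (n + 1)}

lemma Sz_iff {n : ℕ} (hn : 1 ≤ n) (ω : ℕ → ℕ) :
    ω ∈ Sz n ↔ treeAtLeast ω n ∧ ∑ t ∈ Finset.range n, ω t = n - 1 := by
  unfold Sz
  simp only [Set.mem_setOf_eq, tA_succ_iff ω n]
  constructor
  · rintro ⟨h1, h2⟩
    push_neg at h2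
    have := h2 h1
    have h3 := sum_ge_of_tA h1
    exact ⟨h1, by omega⟩
  · rintro ⟨h1, h2⟩
    exact ⟨h1, fun h => by omega⟩

lemma partition (ω : ℕ → ℕ) :
    (∀ n, treeAtLeast ω n) ∨ ∃ n, ω ∈ Sz (n + 1) := by
  by_cases h : ∀ n, treeAtLeast ω n
  · exact Or.inl h
  · push_neg at h
    right
    have hex : ∃ m, ¬ treeAtLeast ω m := h
    classical
    let k := Nat.find hex
    have hk : ¬ treeAtLeast ω k := Nat.find_spec hex
    have hk2 : 2 ≤ k := by
      by_contra hlt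
      push_neg at hlt
      apply hk
      intro j hj1 hj2
      omega
    refine ⟨k - 2, ?_⟩
    have h1 : treeAtLeast ω (k - 1) := by
      by_contra hc
      exact absurd (Nat.find_min hex (by omega : k - 1 < k)) (by simpa using hc)
    constructor
    · have : k - 2 + 1 = k - 1 := by omega
      rw [this]; exact h1
    · have : k - 2 + 1 + 1 = k := by omega
      rw [this]; exact hk

lemma Sz_disjoint {m n : ℕ} (h : m < n) : Sz m ∩ Sz n = ∅ := by
  ext ω
  simp only [Set.mem_inter_iff, Set.mem_empty_iff_false, iff_false]
  rintro ⟨⟨_, h2⟩, h3, _⟩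
  exact h2 (treeAtLeast_mono (by omega) h3)

/-- events on the first n coordinates -/
def okF (F : Set ℕ) (n : ℕ) (p : Fin n → ℕ) : Prop :=
  treeAtLeast (pad n p) n ∧ ∀ t < n,
    ¬(Even (level (pad n p) t) ∧ pad n p t = 1) ∧ ¬(level (pad n p) t ∈ F ∧ pad n p t = 2)

def DD (F : Set ℕ) (n : ℕ) : Set (Fin n → ℕ) :=
  {p | okF F n p ∧ (∑ t ∈ Finset.range n, pad n p t) = n - 1}

lemma DD_sub_ok (F : Set ℕ) (n : ℕ) : ∀ p ∈ DD F n, ok n p := by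
  rintro p ⟨⟨h1, h2⟩, _⟩
  exact ⟨h1, fun t ht hev h1' => (h2 t ht).1 ⟨hev, h1'⟩⟩

def ASet : Set (ℕ → ℕ) := {ω | ∃ i, treeAtLeast ω (i + 1) ∧ Even (level ω i) ∧ ω i = 1}
def BSet (F : Set ℕ) : Set (ℕ → ℕ) :=
  {ω | ∃ i, treeAtLeast ω (i + 1) ∧ level ω i ∈ F ∧ ω i = 2}
def CSet (F : Set ℕ) : Set (ℕ → ℕ) := (ASet ∪ BSet F)ᶜ

lemma sum_restrict (ω : ℕ → ℕ) (n : ℕ) :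
    ∑ t ∈ Finset.range n, pad n (restrictSeed n ω) t = ∑ t ∈ Finset.range n, ω t :=
  Finset.sum_congr rfl fun t ht => pad_restrict ω (Finset.mem_range.1 ht)

lemma CSz_eq (F : Set ℕ) (n : ℕ) :
    CSet F ∩ Sz (n + 1) = restrictSeed (n + 1) ⁻¹' (DD F (n + 1)) := by
  ext ω
  simp only [Set.mem_inter_iff, Set.mem_preimage]
  rw [Sz_iff (by omega) ω]
  constructor
  · rintro ⟨hC, h1, h2⟩
    have halive : ∀ t < n + 1, treeAtLeast ω (t + 1) := fun t ht =>
      treeAtLeast_mono (by omega) h1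
    refine ⟨⟨(tA_restrict_iff ω).2 h1, fun t ht => ?_⟩, ?_⟩
    · simp only [CSet, Set.mem_compl_iff, Set.mem_union] at hC
      push_neg at hC
      obtain ⟨hCA, hCB⟩ := hC
      simp only [ASet, Set.mem_setOf_eq, not_exists] at hCA
      simp only [BSet, Set.mem_setOf_eq, not_exists] at hCB
      have hlev := level_restrict ω ht (halive t ht)
      have hval := pad_restrict ω ht
      constructor
      · rintro ⟨he, hv⟩
        exact hCA t ⟨halive t ht, by rwa [← hlev], by rwa [← hval]⟩
      · rintro ⟨he, hv⟩
        exact hCB t ⟨halive t ht, by rwa [← hlev], by rwa [← hval]⟩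
    · rw [sum_restrict ω (n + 1), h2]
  · rintro ⟨⟨htA, hadm⟩, hsum⟩
    rw [sum_restrict ω (n + 1)] at hsum
    have h1 : treeAtLeast ω (n + 1) := (tA_restrict_iff ω).1 htA
    have halive : ∀ t < n + 1, treeAtLeast ω (t + 1) := fun t ht =>
      treeAtLeast_mono (by omega) h1
    refine ⟨?_, h1, hsum⟩
    simp only [CSet, Set.mem_compl_iff, Set.mem_union, ASet, BSet, Set.mem_setOf_eq]
    rintro (⟨i, hi1, hi2, hi3⟩ | ⟨i, hi1, hi2, hi3⟩)
    · rcases Nat.lt_or_ge i (n + 1) with h | h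
      · have hlev := level_restrict ω h (halive i h)
        have hval := pad_restrict ω h
        exact (hadm i h).1 ⟨by rw [hlev]; exact hi2, by rw [hval]; exact hi3⟩
      · have := hi1 (n + 1) (by omega) (by omega)
        omega
    · rcases Nat.lt_or_ge i (n + 1) with h | h
      · have hlev := level_restrict ω h (halive i h)
        have hval := pad_restrict ω h
        exact (hadm i h).2 ⟨by rw [hlev]; exact hi2, by rw [hval]; exact hi3⟩
      · have := hi1 (n + 1) (by omega) (by omega)
        omega

lemma CInf_subset (F : Set ℕ) (n : ℕ) :
    CSet F ∩ {ω | treeAtLeast ω n} ⊆ restrictSeed n ⁻¹' {p | ok n p} := by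
  rintro ω ⟨hC, hA⟩
  simp only [Set.mem_setOf_eq] at hA
  simp only [Set.mem_preimage, Set.mem_setOf_eq]
  refine ⟨(tA_restrict_iff ω).2 hA, fun t ht hev hval => ?_⟩
  simp only [CSet, Set.mem_compl_iff, Set.mem_union] at hC
  push_neg at hC
  simp only [ASet, Set.mem_setOf_eq, not_exists] at hC
  have halive : treeAtLeast ω (t + 1) := treeAtLeast_mono (by omega) hA
  refine hC.1 t ⟨halive, ?_, ?_⟩
  · rwa [← level_restrict ω ht halive]
  · rwa [← pad_restrict ω ht]

/-- A and B as countable unions of cylinder events -/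
def AA (i : ℕ) : Set (Fin (i + 1) → ℕ) :=
  {p | treeAtLeast (pad (i + 1) p) (i + 1) ∧ Even (level (pad (i + 1) p) i) ∧ pad (i + 1) p i = 1}

def BB (F : Set ℕ) (i : ℕ) : Set (Fin (i + 1) → ℕ) :=
  {p | treeAtLeast (pad (i + 1) p) (i + 1) ∧ level (pad (i + 1) p) i ∈ F ∧ pad (i + 1) p i = 2}

lemma ASet_eq : ASet = ⋃ i, restrictSeed (i + 1) ⁻¹' (AA i) := by
  ext ω
  simp only [ASet, Set.mem_setOf_eq, Set.mem_iUnion, Set.mem_preimage, AA]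
  constructor
  · rintro ⟨i, h1, h2, h3⟩
    have h1' : treeAtLeast ω (i + 1 + 1 - 1) := treeAtLeast_mono (by omega) h1
    refine ⟨i, (tA_restrict_iff ω).2 (by simpa using h1'), ?_, ?_⟩
    · rwa [level_restrict ω (by omega) h1]
    · rwa [pad_restrict ω (by omega)]
  · rintro ⟨i, h1, h2, h3⟩
    have h1' : treeAtLeast ω (i + 1) := (tA_restrict_iff ω).1 h1
    refine ⟨i, h1', ?_, ?_⟩
    · rwa [level_restrict ω (by omega) h1'] at h2
    · rwa [pad_restrict ω (by omega)] at h3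

lemma BSet_eq (F : Set ℕ) : BSet F = ⋃ i, restrictSeed (i + 1) ⁻¹' (BB F i) := by
  ext ω
  simp only [BSet, Set.mem_setOf_eq, Set.mem_iUnion, Set.mem_preimage, BB]
  constructor
  · rintro ⟨i, h1, h2, h3⟩
    refine ⟨i, (tA_restrict_iff ω).2 h1, ?_, ?_⟩
    · rwa [level_restrict ω (by omega) h1]
    · rwa [pad_restrict ω (by omega)]
  · rintro ⟨i, h1, h2, h3⟩
    have h1' : treeAtLeast ω (i + 1) := (tA_restrict_iff ω).1 h1
    refine ⟨i, h1', ?_, ?_⟩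
    · rwa [level_restrict ω (by omega) h1'] at h2
    · rwa [pad_restrict ω (by omega)] at h3

lemma univ_partition :
    (Set.univ : Set (ℕ → ℕ)) = (⋃ n, Sz (n + 1)) ∪ (⋂ n, {ω | treeAtLeast ω n}) := by
  ext ω
  simp only [Set.mem_univ, true_iff, Set.mem_union, Set.mem_iUnion, Set.mem_iInter,
    Set.mem_setOf_eq]
  rcases partition ω with h | ⟨n, hn⟩
  · exact Or.inr h
  · exact Or.inl ⟨n, hn⟩

lemma measurable_restrictSeed (k : ℕ) : Measurable (restrictSeed k) :=
  measurable_pi_iff.2 fun j => measurable_pi_apply j.1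

lemma measure_eq_tsum_ite {α : Type*} [MeasurableSpace α] [MeasurableSingletonClass α]
    [Countable α] (μ : Measure α) (S : Set α) :
    μ S = ∑' x : α, if x ∈ S then μ {x} else 0 := by
  conv_lhs => rw [show S = ⋃ x ∈ S, {x} by simp]
  rw [measure_biUnion S.to_countable (fun x _ y _ hxy => by simpa using hxy)
    (fun b _ => MeasurableSet.of_discrete)]
  rw [tsum_subtype S (fun x => μ {x})]
  exact tsum_congr fun p => by by_cases hp : p ∈ S <;> simp [hp]

lemma pad_val {n : ℕ} (p : Fin n → ℕ) (i : Fin n) : pad n p (i : ℕ) = p i := by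
  unfold pad
  rw [dif_pos i.isLt]

lemma measure_restrict_eq {PP : ℝ → Measure (ℕ → ℕ)} (hP : IsPoissonSeedFamily PP)
    {lam : ℝ} (hlam : 0 < lam) (n : ℕ) (S : Set (Fin n → ℕ)) :
    PP lam (restrictSeed n ⁻¹' S)
      = ∑' p : Fin n → ℕ, if p ∈ S then FF (fPois lam) n p else 0 := by
  have hmap := (hP lam hlam).2 n
  have hres : (fun ω (j : Fin n) => ω j.1) = restrictSeed n := rfl
  rw [hres] at hmap
  rw [← Measure.map_apply (measurable_restrictSeed n) MeasurableSet.of_discrete, hmap,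
    measure_eq_tsum_ite]
  refine tsum_congr fun p => ?_
  by_cases hp : p ∈ S
  · rw [if_pos hp, if_pos hp]
    rw [show ({p} : Set (Fin n → ℕ)) = Set.univ.pi (fun i => {p i}) from
      (Set.univ_pi_singleton p).symm, Measure.pi_pi]
    rw [FF, ← Fin.prod_univ_eq_prod_range (fun t => fPois lam (pad n p t)) n]
    refine Finset.prod_congr rfl fun i _ => ?_
    rw [poissonMeasure_singleton]
    rw [pad_val, fPois]
    rw [Real.coe_toNNReal lam hlam.le]
  · rw [if_neg hp, if_neg hp]

lemma FF_pois_eq {lam : ℝ} (hlam : 0 < lam) {n : ℕ} {p : Fin n → ℕ}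
    (hsum : ∑ t ∈ Finset.range n, pad n p t = n - 1) :
    FF (fPois lam) n p = ENNReal.ofReal (Real.exp (-lam)) ^ n * ENNReal.ofReal lam ^ (n - 1)
      * FF fFac n p := by
  have hterm : ∀ k : ℕ, fPois lam k
      = ENNReal.ofReal (Real.exp (-lam)) * ENNReal.ofReal lam ^ k * fFac k := by
    intro k
    rw [fPois, fFac, ← ENNReal.ofReal_pow hlam.le, ← ENNReal.ofReal_mul (Real.exp_pos _).le,
      ← ENNReal.ofReal_mul (by positivity)]
    congr 1
    ring
  rw [FF, FF, Finset.prod_congr rfl (fun t _ => hterm (pad n p t)), Finset.prod_mul_distrib,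
    Finset.prod_mul_distrib, Finset.prod_const, Finset.prod_pow_eq_pow_sum, hsum,
    Finset.card_range]

noncomputable def aE (F : Set ℕ) (n : ℕ) : ℝ≥0∞ :=
  ∑' p : Fin n → ℕ, if p ∈ DD F n then FF fFac n p else 0

lemma measure_CSz {PP : ℝ → Measure (ℕ → ℕ)} (hP : IsPoissonSeedFamily PP)
    {lam : ℝ} (hlam : 0 < lam) (F : Set ℕ) (n : ℕ) :
    PP lam (CSet F ∩ Sz (n + 1))
      = ENNReal.ofReal (Real.exp (-lam)) ^ (n + 1) * ENNReal.ofReal lam ^ n * aE F (n + 1) := by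
  rw [CSz_eq, measure_restrict_eq hP hlam, aE, ← ENNReal.tsum_mul_left]
  refine tsum_congr fun p => ?_
  by_cases hp : p ∈ DD F (n + 1)
  · rw [if_pos hp, if_pos hp, FF_pois_eq hlam hp.2]
    norm_num
  · rw [if_neg hp, if_neg hp, mul_zero]

lemma measure_CInf {PP : ℝ → Measure (ℕ → ℕ)} (hP : IsPoissonSeedFamily PP)
    {lam : ℝ} (hlam : 0 < lam) (F : Set ℕ) :
    PP lam (CSet F ∩ ⋂ n, {ω | treeAtLeast ω n}) = 0 := by
  obtain ⟨y, ce, co, hy, hytop, hce, hco, hmax⟩ := pois_theta hlam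
  have hbound : ∀ n, PP lam (CSet F ∩ ⋂ m, {ω | treeAtLeast ω m}) ≤ max ce co ^ n := by
    intro n
    calc PP lam (CSet F ∩ ⋂ m, {ω | treeAtLeast ω m})
        ≤ PP lam (restrictSeed n ⁻¹' {p | ok n p}) :=
          measure_mono (subset_trans
            (Set.inter_subset_inter_right _ (Set.iInter_subset _ n)) (CInf_subset F n))
      _ = ∑' p : Fin n → ℕ, if p ∈ {p | ok n p} then FF (fPois lam) n p else 0 :=
          measure_restrict_eq hP hlam n _
      _ ≤ max ce co ^ n := tsum_indicator_le (fPois lam) hy hytop hce hco n _ fun p hp => hp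
  refine le_antisymm ?_ _root_.zero_le
  exact ge_of_tendsto' (ENNReal.tendsto_pow_atTop_nhds_zero_of_lt_one hmax) hbound

lemma measurable_CSz (F : Set ℕ) (n : ℕ) :
    MeasurableSet (CSet F ∩ Sz (n + 1)) := by
  rw [CSz_eq]
  exact measurable_restrictSeed _ MeasurableSet.of_discrete

lemma measure_C {PP : ℝ → Measure (ℕ → ℕ)} (hP : IsPoissonSeedFamily PP)
    {lam : ℝ} (hlam : 0 < lam) (F : Set ℕ) :
    PP lam (CSet F) = ∑' n : ℕ, PP lam (CSet F ∩ Sz (n + 1)) := by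
  have hdecomp : CSet F = (⋃ n, CSet F ∩ Sz (n + 1)) ∪ (CSet F ∩ ⋂ n, {ω | treeAtLeast ω n}) := by
    conv_lhs => rw [← Set.inter_univ (CSet F), univ_partition]
    rw [Set.inter_union_distrib_left, Set.inter_iUnion]
  have hsub1 : (⋃ n, CSet F ∩ Sz (n + 1)) ⊆ CSet F :=
    Set.iUnion_subset fun n => Set.inter_subset_left
  have hunion : PP lam (CSet F) = PP lam (⋃ n, CSet F ∩ Sz (n + 1)) := by
    refine le_antisymm ?_ (measure_mono hsub1)
    calc PP lam (CSet F)
        ≤ PP lam ((⋃ n, CSet F ∩ Sz (n + 1)) ∪ (CSet F ∩ ⋂ n, {ω | treeAtLeast ω n})) :=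
          measure_mono hdecomp.subset
      _ ≤ PP lam (⋃ n, CSet F ∩ Sz (n + 1))
          + PP lam (CSet F ∩ ⋂ n, {ω | treeAtLeast ω n}) := measure_union_le _ _
      _ = PP lam (⋃ n, CSet F ∩ Sz (n + 1)) := by rw [measure_CInf hP hlam F, add_zero]
  rw [hunion]
  refine measure_iUnion ?_ (fun n => measurable_CSz F n)
  intro m n hmn
  rcases Nat.lt_or_ge m n with h | h
  · refine Set.disjoint_left.2 fun ω hm hn => ?_
    have := Sz_disjoint (show m + 1 < n + 1 by omega)
    exact Set.eq_empty_iff_forall_notMem.1 this ω ⟨hm.2, hn.2⟩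
  · have hlt : n < m := by omega
    refine Set.disjoint_left.2 fun ω hm hn => ?_
    have := Sz_disjoint (show n + 1 < m + 1 by omega)
    exact Set.eq_empty_iff_forall_notMem.1 this ω ⟨hn.2, hm.2⟩

lemma aE_le (F : Set ℕ) (n : ℕ) : aE F n ≤ ENNReal.ofReal rho ^ n := by
  have hy : (1 : ℝ≥0∞) ≤ ENNReal.ofReal ((5:ℝ)/4) := by
    rw [← ENNReal.ofReal_one]
    exact ENNReal.ofReal_le_ofReal (by norm_num)
  have hco : (∑' d : ℕ, fFac d) ≤ ENNReal.ofReal ((5:ℝ)/4) * ENNReal.ofReal rho := by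
    refine le_trans hco_fac (mul_le_mul_right (ENNReal.ofReal_le_ofReal (le_max_right _ _)) _)
  have hce : (∑' d : ℕ, if d = 1 then 0 else fFac d * ENNReal.ofReal ((5:ℝ)/4) ^ d)
      ≤ ENNReal.ofReal rho := hce_fac
  have := tsum_indicator_le fFac hy ENNReal.ofReal_ne_top hce hco n (DD F n) (DD_sub_ok F n)
  simpa [max_self, aE] using this

lemma measurable_AB (F : Set ℕ) : MeasurableSet (ASet ∪ BSet F) := by
  refine MeasurableSet.union ?_ ?_
  · rw [ASet_eq]
    exact MeasurableSet.iUnion fun i => measurable_restrictSeed _ MeasurableSet.of_discrete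
  · rw [BSet_eq]
    exact MeasurableSet.iUnion fun i => measurable_restrictSeed _ MeasurableSet.of_discrete

lemma prob_AB {PP : ℝ → Measure (ℕ → ℕ)} (hP : IsPoissonSeedFamily PP)
    {lam : ℝ} (hlam : 0 < lam) (F : Set ℕ) :
    (PP lam (ASet ∪ BSet F)).toReal = 1 - (PP lam (CSet F)).toReal := by
  have hprob : IsProbabilityMeasure (PP lam) := (hP lam hlam).1
  have h := measure_compl (μ := PP lam) (measurable_AB F) (measure_ne_top _ _)
  rw [measure_univ] at h
  have hle : PP lam (ASet ∪ BSet F) ≤ 1 := prob_le_one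
  have hC : PP lam (CSet F) = 1 - PP lam (ASet ∪ BSet F) := h
  rw [hC, ENNReal.toReal_sub_of_le hle (by simp)]
  simp

noncomputable def aR (F : Set ℕ) (n : ℕ) : ℝ := (aE F n).toReal

lemma aR_nonneg (F : Set ℕ) (n : ℕ) : 0 ≤ aR F n := ENNReal.toReal_nonneg

lemma aR_le (F : Set ℕ) (n : ℕ) : aR F n ≤ rho ^ n := by
  refine ENNReal.toReal_le_of_le_ofReal (pow_nonneg rho_pos.le n) ?_
  rw [ENNReal.ofReal_pow rho_pos.le]
  exact aE_le F n

lemma aE_ne_top (F : Set ℕ) (n : ℕ) : aE F n ≠ ⊤ :=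
  ne_top_of_le_ne_top (by simp [ENNReal.ofReal_pow rho_pos.le, ENNReal.ofReal_ne_top]) (aE_le F n)

lemma xexp_le (x : ℝ) : x * Real.exp (-x) ≤ Real.exp (-1) := by
  rcases le_or_gt x 0 with h | h
  · have h2 : x * Real.exp (-x) ≤ 0 := mul_nonpos_of_nonpos_of_nonneg h (Real.exp_pos _).le
    exact h2.trans (Real.exp_pos _).le
  · have h1 : x ≤ Real.exp (x - 1) := by
      have := Real.add_one_le_exp (x - 1)
      linarith
    calc x * Real.exp (-x) ≤ Real.exp (x - 1) * Real.exp (-x) :=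
          mul_le_mul_of_nonneg_right h1 (Real.exp_pos _).le
      _ = Real.exp (-1) := by rw [← Real.exp_add]; ring_nf

lemma toReal_measure_C {PP : ℝ → Measure (ℕ → ℕ)} (hP : IsPoissonSeedFamily PP)
    {lam : ℝ} (hlam : 0 < lam) (F : Set ℕ) :
    (PP lam (CSet F)).toReal
      = ∑' n : ℕ, Real.exp (-lam) ^ (n + 1) * lam ^ n * aR F (n + 1) := by
  rw [measure_C hP hlam F]
  rw [ENNReal.tsum_toReal_eq]
  · refine tsum_congr fun n => ?_
    rw [measure_CSz hP hlam F n, ENNReal.toReal_mul, ENNReal.toReal_mul, ENNReal.toReal_pow,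
      ENNReal.toReal_pow, ENNReal.toReal_ofReal (Real.exp_pos _).le,
      ENNReal.toReal_ofReal hlam.le]
    rfl
  · intro n
    rw [measure_CSz hP hlam F n]
    exact ENNReal.mul_ne_top (ENNReal.mul_ne_top (by simp) (by simp)) (aE_ne_top F (n + 1))

lemma summable_series {lam : ℝ} (hlam : 0 < lam) (F : Set ℕ) :
    Summable (fun n : ℕ => Real.exp (-lam) ^ (n + 1) * lam ^ n * aR F (n + 1)) := by
  have hr : 0 ≤ rho * lam * Real.exp (-lam) :=
    mul_nonneg (mul_nonneg rho_pos.le hlam.le) (Real.exp_pos _).le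
  have hlt : rho * lam * Real.exp (-lam) < 1 := by
    calc rho * lam * Real.exp (-lam) = rho * (lam * Real.exp (-lam)) := by ring
      _ ≤ rho * Real.exp (-1) := mul_le_mul_of_nonneg_left (xexp_le lam) rho_pos.le
      _ < Real.exp (9/10) * Real.exp (-1) := mul_lt_mul_of_pos_right rho_lt (Real.exp_pos _)
      _ = Real.exp (-(1/10)) := by rw [← Real.exp_add]; norm_num
      _ < 1 := by
          rw [Real.exp_lt_one_iff]
          norm_num
  have hgeo : Summable (fun n : ℕ =>
      (rho * Real.exp (-lam)) * (rho * lam * Real.exp (-lam)) ^ n) :=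
    Summable.mul_left _ (summable_geometric_of_lt_one hr hlt)
  refine Summable.of_nonneg_of_le (fun n => ?_) (fun n => ?_) hgeo
  · exact mul_nonneg (mul_nonneg (pow_nonneg (Real.exp_pos _).le _) (pow_nonneg hlam.le _))
      (aR_nonneg F _)
  · calc Real.exp (-lam) ^ (n + 1) * lam ^ n * aR F (n + 1)
        ≤ Real.exp (-lam) ^ (n + 1) * lam ^ n * rho ^ (n + 1) :=
          mul_le_mul_of_nonneg_left (aR_le F (n + 1))
            (mul_nonneg (pow_nonneg (Real.exp_pos _).le _) (pow_nonneg hlam.le _))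
      _ = (rho * Real.exp (-lam)) * (rho * lam * Real.exp (-lam)) ^ n := by
          rw [mul_pow, mul_pow, pow_succ, pow_succ]
          ring

noncomputable def GG (F : Set ℕ) : ℂ → ℂ :=
  fun z => ∑' n : ℕ, (aR F (n + 1) : ℂ) * Complex.exp (-z) ^ (n + 1) * z ^ n

lemma GG_real_eq {lam : ℝ} (hlam : 0 < lam) (F : Set ℕ) :
    GG F (lam : ℂ)
      = ((∑' n : ℕ, Real.exp (-lam) ^ (n + 1) * lam ^ n * aR F (n + 1) : ℝ) : ℂ) := by
  rw [GG, show ((((∑' n : ℕ, Real.exp (-lam) ^ (n + 1) * lam ^ n * aR F (n + 1)) : ℝ)) : ℂ)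
      = Complex.ofRealCLM (∑' n : ℕ, Real.exp (-lam) ^ (n + 1) * lam ^ n * aR F (n + 1))
      from rfl,
    Complex.ofRealCLM.map_tsum (summable_series hlam F)]
  refine tsum_congr fun n => ?_
  show (aR F (n + 1) : ℂ) * Complex.exp (-(lam:ℂ)) ^ (n + 1) * (lam:ℂ) ^ n
      = ((Real.exp (-lam) ^ (n + 1) * lam ^ n * aR F (n + 1) : ℝ) : ℂ)
  have hexp : Complex.exp (-(lam:ℂ)) = ((Real.exp (-lam) : ℝ) : ℂ) := by
    rw [← Complex.ofReal_neg, Complex.ofReal_exp]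
  rw [hexp]
  push_cast
  ring

lemma analyticAt_GG (F : Set ℕ) {lam0 : ℝ} (hl : 0 < lam0) : AnalyticAt ℂ (GG F) (lam0 : ℂ) := by
  have hopen : IsOpen (Metric.ball (lam0 : ℂ) (1/20)) := Metric.isOpen_ball
  have hdiff : DifferentiableOn ℂ (GG F) (Metric.ball (lam0 : ℂ) (1/20)) := by
    refine Complex.differentiableOn_tsum_of_summable_norm
      (u := fun n : ℕ => (rho ^ (n+1) * Real.exp (-(lam0 - 1/20)) ^ (n+1) * (lam0 + 1/20) ^ n))
      ?_ ?_ hopen ?_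
    · have hr : 0 ≤ rho * Real.exp (-(lam0 - 1/20)) * (lam0 + 1/20) :=
        mul_nonneg (mul_nonneg rho_pos.le (Real.exp_pos _).le) (by linarith)
      have hlt : rho * Real.exp (-(lam0 - 1/20)) * (lam0 + 1/20) < 1 := by
        have hL : (lam0 + 1/20) * Real.exp (-(lam0 + 1/20)) ≤ Real.exp (-1) := xexp_le _
        have hsplit : Real.exp (-(lam0 - 1/20))
            = Real.exp (-(lam0 + 1/20)) * Real.exp (1/10) := by
          rw [← Real.exp_add]; congr 1; ring
        calc rho * Real.exp (-(lam0 - 1/20)) * (lam0 + 1/20)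
            = rho * Real.exp (1/10) * ((lam0 + 1/20) * Real.exp (-(lam0 + 1/20))) := by
              rw [hsplit]; ring
          _ ≤ rho * Real.exp (1/10) * Real.exp (-1) :=
              mul_le_mul_of_nonneg_left hL
                (mul_nonneg rho_pos.le (Real.exp_pos _).le)
          _ < Real.exp (9/10) * Real.exp (1/10) * Real.exp (-1) := by
              refine mul_lt_mul_of_pos_right
                (mul_lt_mul_of_pos_right rho_lt (Real.exp_pos _)) (Real.exp_pos _)
          _ = 1 := by rw [← Real.exp_add, ← Real.exp_add]; norm_num
      have hgeo : Summable (fun n : ℕ => (rho * Real.exp (-(lam0 - 1/20)))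
          * ((rho * Real.exp (-(lam0 - 1/20)) * (lam0 + 1/20)) ^ n)) :=
        Summable.mul_left _ (summable_geometric_of_lt_one hr hlt)
      refine hgeo.congr fun n => ?_
      rw [mul_pow, mul_pow, pow_succ, pow_succ]
      ring
    · intro n
      refine Differentiable.differentiableOn ?_
      exact ((differentiable_const _).mul ((Complex.differentiable_exp.comp
        differentiable_neg).pow _)).mul (differentiable_pow n)
    · intro n z hz
      rw [Metric.mem_ball, Complex.dist_eq] at hz
      have hre : lam0 - 1/20 ≤ z.re := by
        have h1 : |(z - lam0).re| ≤ ‖z - lam0‖ := Complex.abs_re_le_norm _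
        have h2 : ((z - (lam0:ℂ)).re) = z.re - lam0 := by simp
        rw [h2] at h1
        have := (abs_le.1 h1).1
        linarith [hz.le]
      have habs : ‖z‖ ≤ lam0 + 1/20 := by
        calc ‖z‖ = ‖(lam0:ℂ) + (z - lam0)‖ := by ring_nf
          _ ≤ ‖(lam0:ℂ)‖ + ‖z - lam0‖ := norm_add_le _ _
          _ ≤ lam0 + 1/20 := by
              have h3 : ‖(lam0:ℂ)‖ = |lam0| := by rw [Complex.norm_real, Real.norm_eq_abs]
              rw [h3, abs_of_pos hl]
              linarith [hz.le]
      have hnorm : ‖(aR F (n + 1) : ℂ) * Complex.exp (-z) ^ (n + 1) * z ^ n‖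
          = aR F (n + 1) * Real.exp (-z.re) ^ (n + 1) * ‖z‖ ^ n := by
        rw [norm_mul, norm_mul, norm_pow, norm_pow, Complex.norm_exp, Complex.norm_real, Real.norm_eq_abs,
          abs_of_nonneg (aR_nonneg F (n + 1))]
        simp
      rw [hnorm]
      have h1 : aR F (n + 1) ≤ rho ^ (n + 1) := aR_le F (n + 1)
      have h2 : Real.exp (-z.re) ^ (n + 1) ≤ Real.exp (-(lam0 - 1/20)) ^ (n + 1) :=
        pow_le_pow_left₀ (Real.exp_pos _).le (Real.exp_le_exp.2 (by linarith)) _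
      have h3 : ‖z‖ ^ n ≤ (lam0 + 1/20) ^ n :=
        pow_le_pow_left₀ (norm_nonneg _) habs n
      refine mul_le_mul (mul_le_mul h1 h2 (pow_nonneg (Real.exp_pos _).le _)
        (pow_nonneg rho_pos.le _)) h3 (pow_nonneg (norm_nonneg _) _) ?_
      exact mul_nonneg (pow_nonneg rho_pos.le _) (pow_nonneg (Real.exp_pos _).le _)
  exact hdiff.analyticAt (hopen.mem_nhds (Metric.mem_ball_self (by norm_num)))

lemma analyticAt_prob {PP : ℝ → Measure (ℕ → ℕ)} (hP : IsPoissonSeedFamily PP) (F : Set ℕ)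
    {lam0 : ℝ} (hl : 0 < lam0) :
    AnalyticAt ℝ (fun lam : ℝ => (PP lam (ASet ∪ BSet F)).toReal) lam0 := by
  have hG : AnalyticAt ℂ (GG F) ((Complex.ofRealCLM : ℝ →L[ℝ] ℂ) lam0) := analyticAt_GG F hl
  have h1 : AnalyticAt ℝ (fun x : ℝ => GG F (x : ℂ)) lam0 :=
    hG.restrictScalars.comp (Complex.ofRealCLM.analyticAt lam0)
  have h2 : AnalyticAt ℝ (fun x : ℝ => (GG F (x : ℂ)).re) lam0 :=
    (Complex.reCLM.analyticAt _).comp h1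
  have h3 : AnalyticAt ℝ (fun x : ℝ => 1 - (GG F (x : ℂ)).re) lam0 :=
    (analyticAt_const (v := (1:ℝ))).sub h2
  refine h3.congr ?_
  filter_upwards [Ioi_mem_nhds hl] with lam hlam
  have hlam' : (0:ℝ) < lam := hlam
  rw [prob_AB hP hlam' F, toReal_measure_C hP hlam' F, GG_real_eq hlam' F]
  simp

end GW

/-- With `A` the event that some node on an even level has exactly one child and, for a
set of levels `F`, `B F` the event that some node on an `F`-level has exactly two children,
the function `λ ↦ P_λ(A ∪ B F)` is real analytic on `(0, ∞)` for every `F`; in particular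
(`F = ∅`), `λ ↦ P_λ(A)` is real analytic on `(0, ∞)`. -/
theorem even_or_Flevel_analytic
    (P : ℝ → Measure (ℕ → ℕ)) (hP : IsPoissonSeedFamily P)
    (A : Set (ℕ → ℕ))
    (B : Set ℕ → Set (ℕ → ℕ))
    (hAdef : A = {ω | ∃ i : ℕ, treeAtLeast ω (i + 1) ∧ Even (level ω i) ∧ ω i = 1})
    (hBdef : ∀ F : Set ℕ,
      B F = {ω | ∃ i : ℕ, treeAtLeast ω (i + 1) ∧ level ω i ∈ F ∧ ω i = 2}) :
    (∀ F : Set ℕ,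
      AnalyticOnNhd ℝ (fun lam : ℝ => (P lam (A ∪ B F)).toReal) (Set.Ioi 0)) ∧
    AnalyticOnNhd ℝ (fun lam : ℝ => (P lam A).toReal) (Set.Ioi 0) := by
  have hA : A = GW.ASet := by rw [hAdef]; rfl
  have hB : ∀ F : Set ℕ, B F = GW.BSet F := fun F => by rw [hBdef F]; rfl
  have main : ∀ F : Set ℕ,
      AnalyticOnNhd ℝ (fun lam : ℝ => (P lam (A ∪ B F)).toReal) (Set.Ioi 0) := by
    intro F lam0 hl0
    have h := GW.analyticAt_prob hP F (Set.mem_Ioi.1 hl0)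
    rw [hA, hB F]
    exact h
  refine ⟨main, ?_⟩
  have hBempty : GW.BSet ∅ = ∅ := by
    ext ω
    simp [GW.BSet]
  have hunion : A ∪ B ∅ = A := by
    rw [hA, hB ∅, hBempty, Set.union_empty]
  intro lam0 hl0
  have h := main ∅ lam0 hl0
  rw [hunion] at h
  exact h
end
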